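/- arXiv:math/0507264 — 4 statements merged into one kernel-verified Lean document; each statement's English description precedes it below -/
import Mathlib

section
/- Let K : ℝ → ℝ be C¹ with K'(p) > 0 for all p ∈ ℝ. Let f : (0,∞) → ℝ be bounded on every compact subset of (0,∞). Let c > 0 and let u, w be real functions on [0,c) that are continuously differentiable on [0,c) and positive on (0,c), such that the functions t ↦ K(u'(t)) and t ↦ K(w'(t)) are differentiable on (0,c) with (d/dt) K(u'(t)) = f(u(t)) and (d/dt) K(w'(t)) = f(w(t)) for all t ∈ (0,c). Assume u(0) = w(0) = 0, u'(0) = w'(0), and u'(t) > 0 for all t ∈ (0,c). Then u(t) = w(t) for all t ∈ [0,c). -/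
open Set Filter Topology

namespace LN

lemma deriv_within {v : ℝ → ℝ} {c t : ℝ} (ht : t ∈ Set.Ioo 0 c) :
    derivWithin v (Set.Ico 0 c) t = deriv v t :=
  derivWithin_of_mem_nhds (Ico_mem_nhds ht.1 ht.2)

lemma contOn_deriv {v : ℝ → ℝ} {c : ℝ} (hv1 : ContDiffOn ℝ 1 v (Set.Ico 0 c)) :
    ContinuousOn (deriv v) (Set.Ioo 0 c) :=
  ((hv1.continuousOn_derivWithin (uniqueDiffOn_Ico 0 c) le_rfl).mono
    Set.Ioo_subset_Ico_self).congr (fun _ hx => (LN.deriv_within hx).symm)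

lemma second_deriv {K f v : ℝ → ℝ} {c : ℝ} (hK : ContDiff ℝ 1 K)
    (hK' : ∀ p : ℝ, 0 < deriv K p)
    (hv1 : ContDiffOn ℝ 1 v (Set.Ico 0 c))
    (hveq : ∀ t ∈ Set.Ioo 0 c, HasDerivAt (fun τ => K (deriv v τ)) (f (v t)) t)
    {t : ℝ} (ht : t ∈ Set.Ioo 0 c) :
    HasDerivAt (deriv v) ((deriv K (deriv v t))⁻¹ * f (v t)) t := by
  have hct : ContinuousAt (deriv v) t :=
    (LN.contOn_deriv hv1).continuousAt (Ioo_mem_nhds ht.1 ht.2)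
  set p := deriv v t with hp
  have hKs : HasStrictDerivAt K (deriv K p) p := hK.contDiffAt.hasStrictDerivAt one_ne_zero
  have hne : deriv K p ≠ 0 := (hK' p).ne'
  set L := hKs.localInverse K _ p hne with hLdef
  have hL : HasStrictDerivAt L (deriv K p)⁻¹ (K p) := hKs.to_localInverse hne
  have hlefteq : ∀ᶠ x in 𝓝 p, L (K x) = x :=
    (hKs.hasStrictFDerivAt_equiv hne).eventually_left_inverse
  have hev : (fun τ => L (K (deriv v τ))) =ᶠ[𝓝 t] deriv v := hct.eventually hlefteq
  have hcomp : HasDerivAt (fun τ => L (K (deriv v τ))) ((deriv K p)⁻¹ * f (v t)) t :=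
    hL.hasDerivAt.comp t (hveq t ht)
  exact hcomp.congr_of_eventuallyEq hev.symm

noncomputable def Phi (K : ℝ → ℝ) (p : ℝ) : ℝ := ∫ s in (0:ℝ)..p, s * deriv K s

variable {K : ℝ → ℝ}

lemma Phi_deriv (hK : ContDiff ℝ 1 K) (p : ℝ) :
    HasStrictDerivAt (Phi K) (p * deriv K p) p :=
  (continuous_id.mul (hK.continuous_deriv le_rfl)).integral_hasStrictDerivAt 0 p

lemma Phi_zero : Phi K 0 = 0 := intervalIntegral.integral_same

lemma Phi_mono (hK : ContDiff ℝ 1 K) (hK' : ∀ p : ℝ, 0 < deriv K p) :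
    StrictMonoOn (Phi K) (Set.Ici 0) := by
  apply strictMonoOn_of_deriv_pos (convex_Ici 0)
    (fun x _ => ((Phi_deriv hK x).hasDerivAt.continuousAt).continuousWithinAt)
  intro x hx
  rw [interior_Ici] at hx
  rw [(Phi_deriv hK x).hasDerivAt.deriv]
  exact mul_pos hx (hK' x)

lemma Phi_pos (hK : ContDiff ℝ 1 K) (hK' : ∀ p : ℝ, 0 < deriv K p) {p : ℝ} (hp : 0 < p) :
    0 < Phi K p := by
  have := Phi_mono hK hK' (Set.self_mem_Ici) (Set.mem_Ici.2 hp.le) hp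
  rwa [Phi_zero] at this

lemma const_of_lim {g : ℝ → ℝ} {T b L : ℝ}
    (hg : ∀ t ∈ Set.Ioo T b, HasDerivAt g 0 t)
    (hlim : Filter.Tendsto g (𝓝[>] T) (𝓝 L)) :
    ∀ t ∈ Set.Ioo T b, g t = L := by
  intro t ht
  have hdiff : ∀ t' ∈ Set.Ioo T b, DifferentiableAt ℝ g t' := fun t' ht' => (hg t' ht').differentiableAt
  have hconst : ∀ t' ∈ Set.Ioo T t, g t' = g t := by
    intro t' ht'
    have hsub : Set.Icc t' t ⊆ Set.Ioo T b := fun x hx =>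
      ⟨lt_of_lt_of_le ht'.1 hx.1, lt_of_le_of_lt hx.2 ht.2⟩
    have hcont : ContinuousOn g (Set.Icc t' t) := fun x hx =>
      ((hdiff x (hsub hx)).continuousAt).continuousWithinAt
    have hdf : DifferentiableOn ℝ g (Set.Ioo t' t) := fun x hx =>
      ((hdiff x (hsub (Set.Ioo_subset_Icc_self hx))).differentiableWithinAt)
    obtain ⟨z, hz, hz'⟩ := exists_deriv_eq_slope g ht'.2 hcont hdf
    have h0 : deriv g z = 0 := (hg z (hsub (Set.Ioo_subset_Icc_self hz))).deriv
    rw [h0] at hz'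
    have hden : t - t' ≠ 0 := sub_ne_zero.2 (ne_of_gt ht'.2)
    field_simp at hz'
    linarith [hz'.symm]
  have hIoo : Set.Ioo T t ∈ 𝓝[>] T := Ioo_mem_nhdsGT ht.1
  have h2 : Filter.Tendsto (fun _ : ℝ => g t) (𝓝[>] T) (𝓝 L) := by
    apply hlim.congr'
    filter_upwards [hIoo] with t' ht' using (hconst t' ht')
  exact (tendsto_nhds_unique h2 tendsto_const_nhds).symm

lemma key {K f u w : ℝ → ℝ} {c : ℝ} (hK : ContDiff ℝ 1 K) (hK' : ∀ p : ℝ, 0 < deriv K p)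
    (hc : 0 < c)
    (hu1 : ContDiffOn ℝ 1 u (Set.Ico 0 c)) (hw1 : ContDiffOn ℝ 1 w (Set.Ico 0 c))
    (hwpos : ∀ t ∈ Set.Ioo 0 c, 0 < w t)
    (hueq : ∀ t ∈ Set.Ioo 0 c, HasDerivAt (fun τ => K (deriv u τ)) (f (u t)) t)
    (hweq : ∀ t ∈ Set.Ioo 0 c, HasDerivAt (fun τ => K (deriv w τ)) (f (w t)) t)
    (hu0 : u 0 = 0) (hw0 : w 0 = 0)
    (hu' : ∀ t ∈ Set.Ioo 0 c, 0 < deriv u t)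
    {T : ℝ} (hT : T ∈ Set.Ico 0 c)
    (hwT : w T = u T)
    (haT : derivWithin u (Set.Ico 0 c) T = derivWithin w (Set.Ico 0 c) T) :
    ∃ b > T, ∀ t ∈ Set.Ioo T b, u t = w t := by
  obtain ⟨hT0, hTc⟩ := hT
  set u' := derivWithin u (Set.Ico 0 c) with hu'def
  set d := (T + c)/2 with hd
  have hTd : T < d := by rw [hd]; linarith
  have hdc : d < c := by rw [hd]; linarith
  have hd0 : 0 < d := lt_of_le_of_lt hT0 hTd
  have hIcd : Set.Icc 0 d ⊆ Set.Ico 0 c := fun x hx => ⟨hx.1, lt_of_le_of_lt hx.2 hdc⟩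
  have hucont : ContinuousOn u (Set.Ico 0 c) := hu1.continuousOn
  have hwcont : ContinuousOn w (Set.Ico 0 c) := hw1.continuousOn
  have hum : StrictMonoOn u (Set.Ico 0 c) := by
    apply strictMonoOn_of_deriv_pos (convex_Ico 0 c) hucont
    intro x hx
    rw [interior_Ico] at hx; exact hu' x hx
  have humd : StrictMonoOn u (Set.Icc 0 d) := hum.mono hIcd
  have hinj : Set.InjOn u (Set.Icc 0 d) := humd.injOn
  set ρ := Function.invFunOn u (Set.Icc 0 d) with hρdef
  have hρleft : ∀ x ∈ Set.Icc 0 d, ρ (u x) = x := fun x hx => hinj.leftInvOn_invFunOn hx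
  have hud_pos : 0 < u d := by
    have := hum ⟨le_rfl, hc⟩ (hIcd ⟨hd0.le, le_rfl⟩) hd0
    rwa [hu0] at this
  have himage : Set.Icc 0 (u d) ⊆ u '' Set.Icc 0 d := by
    have := intermediate_value_Icc hd0.le (hucont.mono hIcd)
    rwa [hu0] at this
  have hρmem : ∀ s ∈ Set.Icc 0 (u d), ρ s ∈ Set.Icc 0 d ∧ u (ρ s) = s := by
    intro s hs
    obtain ⟨x, hx, hxs⟩ := himage hs
    exact ⟨Function.invFunOn_mem ⟨x, hx, hxs⟩, Function.invFunOn_eq ⟨x, hx, hxs⟩⟩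
  have hρlt : ∀ s ∈ Set.Icc 0 (u d), ∀ x ∈ Set.Icc 0 d, u x < s → x < ρ s := by
    intro s hs x hx hlt
    obtain ⟨hρs, hus⟩ := hρmem s hs
    exact (humd.lt_iff_lt hx hρs).1 (by rwa [hus])
  have hρgt : ∀ s ∈ Set.Icc 0 (u d), ∀ x ∈ Set.Icc 0 d, s < u x → ρ s < x := by
    intro s hs x hx hlt
    obtain ⟨hρs, hus⟩ := hρmem s hs
    exact (humd.lt_iff_lt hρs hx).1 (by rwa [hus])
  set F := fun s => Phi K (u' (ρ s)) with hFdef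
  -- differentiability of ρ
  have hρD : ∀ s ∈ Set.Ioo 0 (u d), HasDerivAt ρ (deriv u (ρ s))⁻¹ s ∧ ρ s ∈ Set.Ioo 0 d := by
    intro s hs
    obtain ⟨hρs, hus⟩ := hρmem s (Set.Ioo_subset_Icc_self hs)
    have hτpos : 0 < ρ s := by
      refine hρlt s (Set.Ioo_subset_Icc_self hs) 0 ⟨le_rfl, hd0.le⟩ ?_
      rw [hu0]; exact hs.1
    have hτlt : ρ s < d := by
      refine hρgt s (Set.Ioo_subset_Icc_self hs) d ⟨hd0.le, le_rfl⟩ ?_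
      exact hs.2
    have hτIoo : ρ s ∈ Set.Ioo 0 c := ⟨hτpos, lt_trans hτlt hdc⟩
    have hτIood : ρ s ∈ Set.Ioo 0 d := ⟨hτpos, hτlt⟩
    have hus' : HasStrictDerivAt u (deriv u (ρ s)) (ρ s) :=
      (hu1.contDiffAt (Ico_mem_nhds hτIoo.1 hτIoo.2)).hasStrictDerivAt one_ne_zero
    have hne : deriv u (ρ s) ≠ 0 := (hu' _ hτIoo).ne'
    have hLd : HasStrictDerivAt (hus'.localInverse u _ _ hne) (deriv u (ρ s))⁻¹ (u (ρ s)) :=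
      hus'.to_localInverse hne
    set L := hus'.localInverse u _ (ρ s) hne with hLdef
    have hevR : ∀ᶠ y in 𝓝 (u (ρ s)), u (L y) = y :=
      (hus'.hasStrictFDerivAt_equiv hne).eventually_right_inverse
    have hLc : ContinuousAt L (u (ρ s)) :=
      (hus'.hasStrictFDerivAt_equiv hne).localInverse_continuousAt
    have hL0 : L (u (ρ s)) = ρ s :=
      (hus'.hasStrictFDerivAt_equiv hne).localInverse_apply_image
    have hLmem : ∀ᶠ y in 𝓝 (u (ρ s)), L y ∈ Set.Ioo 0 d := by
      have := hLc.eventually_mem (by rw [hL0]; exact Ioo_mem_nhds hτpos hτlt)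
      exact this
    have hmem2 : ∀ᶠ y in 𝓝 (u (ρ s)), y ∈ Set.Ioo 0 (u d) := by
      rw [hus]; exact eventually_of_mem (Ioo_mem_nhds hs.1 hs.2) (fun y hy => hy)
    have heq : ρ =ᶠ[𝓝 s] L := by
      rw [← hus]
      filter_upwards [hevR, hLmem, hmem2] with y h1 h2 h3
      obtain ⟨hm, he⟩ := hρmem y (Set.Ioo_subset_Icc_self h3)
      exact hinj hm (Set.Ioo_subset_Icc_self h2) (by rw [he, h1])
    have hLd' : HasStrictDerivAt L (deriv u (ρ s))⁻¹ s := by rwa [hus] at hLd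
    exact ⟨hLd'.hasDerivAt.congr_of_eventuallyEq heq, hτIood⟩
  have hu'congr : ∀ t ∈ Set.Ioo 0 c, u' t = deriv u t := fun t ht => LN.deriv_within ht
  have hu2 : ∀ t ∈ Set.Ioo 0 c, HasDerivAt (deriv u) ((deriv K (deriv u t))⁻¹ * f (u t)) t :=
    fun t ht => second_deriv hK hK' hu1 hueq ht
  have hw2 : ∀ t ∈ Set.Ioo 0 c, HasDerivAt (deriv w) ((deriv K (deriv w t))⁻¹ * f (w t)) t :=
    fun t ht => second_deriv hK hK' hw1 hweq ht
  have hwD : ∀ t ∈ Set.Ioo 0 c, HasDerivAt w (deriv w t) t := by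
    intro t ht
    exact (((hw1.differentiableOn one_ne_zero) t ⟨ht.1.le, ht.2⟩).differentiableAt
      (Ico_mem_nhds ht.1 ht.2)).hasDerivAt
  -- derivative of F
  have hFD : ∀ s ∈ Set.Ioo 0 (u d), HasDerivAt F (f s) s := by
    intro s hs
    obtain ⟨hρd, hρIoo⟩ := hρD s hs
    obtain ⟨hρs, hus⟩ := hρmem s (Set.Ioo_subset_Icc_self hs)
    have hτIoo : ρ s ∈ Set.Ioo 0 c := ⟨hρIoo.1, lt_trans hρIoo.2 hdc⟩
    have h2 := hu2 (ρ s) hτIoo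
    have h3 := (Phi_deriv hK (deriv u (ρ s))).hasDerivAt
    have hcomp := h3.comp s (h2.comp s hρd)
    have hFev : F =ᶠ[𝓝 s] fun σ => Phi K (deriv u (ρ σ)) := by
      have hρc : ContinuousAt ρ s := hρd.continuousAt
      filter_upwards [hρc.eventually_mem (Ioo_mem_nhds hτIoo.1 hτIoo.2)] with σ hσ
      simp only [hFdef]
      rw [hu'congr _ hσ]
    have hres := (hcomp.congr_of_eventuallyEq hFev)
    refine hres.congr_deriv ?_
    rw [hus]
    have h4 : deriv K (deriv u (ρ s)) ≠ 0 := (hK' _).ne'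
    have h5 : deriv u (ρ s) ≠ 0 := (hu' _ hτIoo).ne'
    field_simp
  -- filter facts at T from the right
  have hIooT : Set.Ioo T d ∈ 𝓝[>] T := Ioo_mem_nhdsGT hTd
  have hsubIc : Set.Ioo T d ⊆ Set.Ico 0 c := fun x hx =>
    ⟨le_trans hT0 hx.1.le, lt_trans hx.2 hdc⟩
  have hsubIoo : Set.Ioo T d ⊆ Set.Ioo 0 c := fun x hx =>
    ⟨lt_of_le_of_lt hT0 hx.1, lt_trans hx.2 hdc⟩
  have hle : 𝓝[>] T ≤ 𝓝[Set.Ico 0 c] T := by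
    rw [← nhdsWithin_Ioo_eq_nhdsGT hTd]
    exact nhdsWithin_mono _ hsubIc
  have hwTend : Filter.Tendsto w (𝓝[>] T) (𝓝 (u T)) := by
    have := (hwcont T ⟨hT0, hTc⟩).tendsto
    rw [hwT] at this
    exact this.mono_left hle
  have hu'cont : ContinuousOn u' (Set.Ico 0 c) :=
    hu1.continuousOn_derivWithin (uniqueDiffOn_Ico 0 c) le_rfl
  have hw'cont : ContinuousOn (derivWithin w (Set.Ico 0 c)) (Set.Ico 0 c) :=
    hw1.continuousOn_derivWithin (uniqueDiffOn_Ico 0 c) le_rfl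
  have hw'Tend : Filter.Tendsto (deriv w) (𝓝[>] T) (𝓝 (u' T)) := by
    have h1 := (hw'cont T ⟨hT0, hTc⟩).tendsto
    rw [← haT] at h1
    refine (h1.mono_left hle).congr' ?_
    filter_upwards [hIooT] with t ht using (LN.deriv_within (hsubIoo ht))
  have huTd : u T < u d := hum ⟨hT0, hTc⟩ (hIcd ⟨hd0.le, le_rfl⟩) hTd
  have hwev : ∀ᶠ t in 𝓝[>] T, w t ∈ Set.Ioo 0 (u d) := by
    have h1 : ∀ᶠ t in 𝓝[>] T, w t < u d := hwTend.eventually_lt_const huTd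
    have h2 : ∀ᶠ t in 𝓝[>] T, 0 < w t := by
      filter_upwards [hIooT] with t ht using hwpos t (hsubIoo ht)
    filter_upwards [h1, h2] with t h1t h2t using ⟨h2t, h1t⟩
  have hρwTend : Filter.Tendsto (fun t => ρ (w t)) (𝓝[>] T) (𝓝 T) := by
    rw [tendsto_order]
    constructor
    · intro l hl
      rcases lt_or_ge l 0 with h0 | h0
      · filter_upwards [hwev] with t ht
        exact lt_of_lt_of_le h0 (hρmem _ (Set.Ioo_subset_Icc_self ht)).1.1
      · have hlmem : l ∈ Set.Icc 0 d := ⟨h0, le_of_lt (lt_trans hl hTd)⟩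
        have hult : u l < u T := hum (hIcd hlmem) ⟨hT0, hTc⟩ hl
        have h1 : ∀ᶠ t in 𝓝[>] T, u l < w t := hwTend.eventually_const_lt hult
        filter_upwards [h1, hwev] with t h1t h2t
        exact hρlt (w t) (Set.Ioo_subset_Icc_self h2t) l hlmem h1t
    · intro l hl
      rcases le_or_gt l d with hld | hld
      · have hlmem : l ∈ Set.Icc 0 d := ⟨le_trans hT0 hl.le, hld⟩
        have hult : u T < u l := hum ⟨hT0, hTc⟩ (hIcd hlmem) hl
        have h1 : ∀ᶠ t in 𝓝[>] T, w t < u l := hwTend.eventually_lt_const hult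
        filter_upwards [h1, hwev] with t h1t h2t
        exact hρgt (w t) (Set.Ioo_subset_Icc_self h2t) l hlmem h1t
      · filter_upwards [hwev] with t ht
        exact lt_of_le_of_lt (hρmem _ (Set.Ioo_subset_Icc_self ht)).1.2 hld
  have hFwTend : Filter.Tendsto (fun t => F (w t)) (𝓝[>] T) (𝓝 (Phi K (u' T))) := by
    have h1 : Filter.Tendsto (fun t => ρ (w t)) (𝓝[>] T) (𝓝[Set.Ico 0 c] T) := by
      rw [tendsto_nhdsWithin_iff]
      refine ⟨hρwTend, ?_⟩
      filter_upwards [hwev] with t ht using hIcd (hρmem _ (Set.Ioo_subset_Icc_self ht)).1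
    have h2 := ((hu'cont T ⟨hT0, hTc⟩).tendsto).comp h1
    exact ((Phi_deriv hK (u' T)).hasDerivAt.continuousAt.tendsto).comp h2
  have hΦw'Tend : Filter.Tendsto (fun t => Phi K (deriv w t)) (𝓝[>] T) (𝓝 (Phi K (u' T))) :=
    ((Phi_deriv hK (u' T)).hasDerivAt.continuousAt.tendsto).comp hw'Tend
  -- choose a right interval with all needed pointwise properties
  have hall : ∀ᶠ t in 𝓝[>] T,
      t ∈ Set.Ioo 0 c ∧ w t ∈ Set.Ioo 0 (u d) ∧ (0 < T → 0 < deriv w t) := by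
    have h3 : ∀ᶠ t in 𝓝[>] T, (0 < T → 0 < deriv w t) := by
      rcases eq_or_lt_of_le hT0 with h | h
      · filter_upwards with t ht
        exact absurd ht (by rw [← h]; exact lt_irrefl 0)
      · have haTpos : 0 < u' T := by
          have := hu'congr T ⟨h, hTc⟩
          rw [this]; exact hu' T ⟨h, hTc⟩
        filter_upwards [hw'Tend.eventually_const_lt haTpos] with t ht using fun _ => ht
    have h4 : ∀ᶠ t in 𝓝[>] T, t ∈ Set.Ioo 0 c := by
      filter_upwards [hIooT] with t ht using hsubIoo ht
    filter_upwards [h3, h4, hwev] with t h3t h4t h5t using ⟨h4t, h5t, h3t⟩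
  obtain ⟨b, hb, hbsub⟩ := mem_nhdsGT_iff_exists_Ioo_subset.1 hall
  rw [Set.mem_Ioi] at hb
  set I := Set.Ioo T b with hI
  have hImem : ∀ t ∈ I, t ∈ Set.Ioo 0 c ∧ w t ∈ Set.Ioo 0 (u d) ∧ (0 < T → 0 < deriv w t) :=
    fun t ht => hbsub ht
  -- the conserved quantity
  have hh' : ∀ t ∈ I, HasDerivAt (fun t => Phi K (deriv w t) - F (w t)) 0 t := by
    intro t ht
    obtain ⟨htc, hwtm, _⟩ := hImem t ht
    have h1 : HasDerivAt (fun t => Phi K (deriv w t))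
        (deriv w t * deriv K (deriv w t) * ((deriv K (deriv w t))⁻¹ * f (w t))) t :=
      (Phi_deriv hK (deriv w t)).hasDerivAt.comp t (hw2 t htc)
    have h2 : HasDerivAt (fun t => F (w t)) (f (w t) * deriv w t) t :=
      (hFD (w t) hwtm).comp t (hwD t htc)
    have h3 := h1.sub h2
    refine h3.congr_deriv ?_
    have h4 : deriv K (deriv w t) ≠ 0 := (hK' _).ne'
    field_simp
    ring
  have hΦF : ∀ t ∈ I, Phi K (deriv w t) = F (w t) := by
    have hlim : Filter.Tendsto (fun t => Phi K (deriv w t) - F (w t)) (𝓝[>] T) (𝓝 0) := by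
      have := hΦw'Tend.sub hFwTend
      simpa using this
    intro t ht
    have := const_of_lim hh' hlim t ht
    linarith
  have hFpos : ∀ s ∈ Set.Ioo 0 (u d), 0 < F s := by
    intro s hs
    obtain ⟨_, hρIoo⟩ := hρD s hs
    have : 0 < u' (ρ s) := by
      rw [hu'congr _ ⟨hρIoo.1, lt_trans hρIoo.2 hdc⟩]
      exact hu' _ ⟨hρIoo.1, lt_trans hρIoo.2 hdc⟩
    exact Phi_pos hK hK' this
  have hwne : ∀ t ∈ I, deriv w t ≠ 0 := by
    intro t ht h0
    have h1 := hΦF t ht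
    rw [h0, Phi_zero] at h1
    exact absurd h1.symm (ne_of_gt (hFpos (w t) (hImem t ht).2.1))
  have hwpos' : ∀ t ∈ I, 0 < deriv w t := by
    rcases eq_or_lt_of_le hT0 with hT0' | hT0'
    · intro t ht
      by_contra hcon
      push_neg at hcon
      have ht0neg : deriv w t < 0 := lt_of_le_of_ne hcon (hwne t ht)
      have hneg : ∀ z ∈ Set.Ioo T t, deriv w z < 0 := by
        intro z hz
        rcases lt_or_ge (deriv w z) 0 with h | h
        · exact h
        have hzpos : 0 < deriv w z := lt_of_le_of_ne h (Ne.symm (hwne z ⟨hz.1, lt_trans hz.2 ht.2⟩))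
        have hsubI2 : Set.Icc z t ⊆ I := fun x hx =>
          ⟨lt_of_lt_of_le hz.1 hx.1, lt_of_le_of_lt hx.2 ht.2⟩
        have hcont : ContinuousOn (deriv w) (Set.Icc z t) :=
          (contOn_deriv hw1).mono (fun x hx => (hImem x (hsubI2 hx)).1)
        have h0mem : (0:ℝ) ∈ Set.Icc (deriv w t) (deriv w z) := ⟨ht0neg.le, hzpos.le⟩
        obtain ⟨y, hy, hy0⟩ := intermediate_value_Icc' hz.2.le hcont h0mem
        exact absurd hy0 (hwne y (hsubI2 hy))
      have hanti : StrictAntiOn w (Set.Icc T t) := by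
        apply strictAntiOn_of_deriv_neg (convex_Icc _ _)
          (hwcont.mono (fun x hx => ⟨le_trans hT0 hx.1, lt_of_le_of_lt hx.2 (hImem t ht).1.2⟩))
        intro x hx
        rw [interior_Icc] at hx
        exact hneg x hx
      have hlt : w t < w T := hanti ⟨le_rfl, ht.1.le⟩ ⟨ht.1.le, le_rfl⟩ ht.1
      rw [← hT0'] at hlt
      rw [hw0] at hlt
      exact absurd (hwpos t (hImem t ht).1) (not_lt.2 hlt.le)
    · exact fun t ht => (hImem t ht).2.2 hT0'
  have hρwIoo : ∀ t ∈ I, ρ (w t) ∈ Set.Ioo 0 c := by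
    intro t ht
    have := (hρD (w t) (hImem t ht).2.1).2
    exact ⟨this.1, lt_trans this.2 hdc⟩
  have hmatch : ∀ t ∈ I, deriv w t = u' (ρ (w t)) := by
    intro t ht
    have h1 : 0 < u' (ρ (w t)) := by
      rw [hu'congr _ (hρwIoo t ht)]
      exact hu' _ (hρwIoo t ht)
    exact (Phi_mono hK hK').injOn (Set.mem_Ici.2 (hwpos' t ht).le)
      (Set.mem_Ici.2 h1.le) (hΦF t ht)
  -- ψ(t) = ρ(w(t)) has derivative 1 and tends to T
  have hψ0 : ∀ t ∈ I, HasDerivAt (fun t => ρ (w t) - t) 0 t := by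
    intro t ht
    obtain ⟨htc, hwtm, _⟩ := hImem t ht
    have hρd := (hρD (w t) hwtm).1
    have hcomp := hρd.comp t (hwD t htc)
    have hval : (deriv u (ρ (w t)))⁻¹ * deriv w t = 1 := by
      have h1 : deriv u (ρ (w t)) = deriv w t := by
        rw [hmatch t ht, hu'congr _ (hρwIoo t ht)]
      rw [h1]
      exact inv_mul_cancel₀ (hwne t ht)
    rw [hval] at hcomp
    exact (hcomp.sub (hasDerivAt_id t)).congr_deriv (by simp)
  have hψlim : Filter.Tendsto (fun t => ρ (w t) - t) (𝓝[>] T) (𝓝 0) := by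
    have h1 : Filter.Tendsto (fun t : ℝ => t) (𝓝[>] T) (𝓝 T) :=
      tendsto_id.mono_left nhdsWithin_le_nhds
    have := hρwTend.sub h1
    simpa using this
  have hψeq := const_of_lim hψ0 hψlim
  refine ⟨b, hb, fun t ht => ?_⟩
  have h1 := hψeq t ht
  have h2 := (hρmem (w t) (Set.Ioo_subset_Icc_self (hImem t ht).2.1)).2
  have h3 : ρ (w t) = t := by linarith
  rw [h3] at h2
  exact h2

end LN

set_option maxHeartbeats 1000000 in
/-- Lemma 5.4 of Li–Nirenberg, extending Lemma 2.2. -/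
theorem stmt_13 (K : ℝ → ℝ) (hK : ContDiff ℝ 1 K) (hK' : ∀ p : ℝ, 0 < deriv K p)
    (f : ℝ → ℝ)
    (hf : ∀ s : Set ℝ, s ⊆ Set.Ioi 0 → IsCompact s → ∃ M : ℝ, ∀ x ∈ s, |f x| ≤ M)
    (c : ℝ) (hc : 0 < c) (u w : ℝ → ℝ)
    (hu1 : ContDiffOn ℝ 1 u (Set.Ico 0 c)) (hw1 : ContDiffOn ℝ 1 w (Set.Ico 0 c))
    (hupos : ∀ t ∈ Set.Ioo 0 c, 0 < u t) (hwpos : ∀ t ∈ Set.Ioo 0 c, 0 < w t)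
    (hueq : ∀ t ∈ Set.Ioo 0 c, HasDerivAt (fun τ => K (deriv u τ)) (f (u t)) t)
    (hweq : ∀ t ∈ Set.Ioo 0 c, HasDerivAt (fun τ => K (deriv w τ)) (f (w t)) t)
    (hu0 : u 0 = 0) (hw0 : w 0 = 0)
    (h'0 : derivWithin u (Set.Ico 0 c) 0 = derivWithin w (Set.Ico 0 c) 0)
    (hu' : ∀ t ∈ Set.Ioo 0 c, 0 < deriv u t) :
    ∀ t ∈ Set.Ico 0 c, u t = w t := by
  intro t ht
  by_contra hne
  set E := {x | x ∈ Set.Ico 0 c ∧ u x ≠ w x} with hE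
  have hEne : E.Nonempty := ⟨t, ht, hne⟩
  have hEbdd : BddBelow E := ⟨0, fun x hx => hx.1.1⟩
  set T := sInf E with hTdef
  have hT0 : 0 ≤ T := le_csInf hEne (fun x hx => hx.1.1)
  have hTt : T ≤ t := csInf_le hEbdd ⟨ht, hne⟩
  have hTc : T < c := lt_of_le_of_lt hTt ht.2
  have hbelow : ∀ s, 0 ≤ s → s < T → u s = w s := by
    intro s h0 hsT
    by_contra h
    exact absurd (csInf_le hEbdd ⟨⟨h0, lt_trans hsT hTc⟩, h⟩) (not_le.2 hsT)
  have hwT : w T = u T := by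
    rcases eq_or_lt_of_le hT0 with h | h
    · rw [← h, hu0, hw0]
    · -- limit from the left
      have hleL : 𝓝[Set.Ioo 0 T] T ≤ 𝓝[Set.Ico 0 c] T := by
        apply nhdsWithin_mono
        exact fun x hx => ⟨hx.1.le, lt_trans hx.2 hTc⟩
      have hnb : (𝓝[Set.Ioo 0 T] T).NeBot := by
        rw [nhdsWithin_Ioo_eq_nhdsLT h]
        infer_instance
      have h1 : Filter.Tendsto (fun s => u s - w s) (𝓝[Set.Ioo 0 T] T) (𝓝 (u T - w T)) :=
        (((hu1.continuousOn T ⟨hT0, hTc⟩).sub (hw1.continuousOn T ⟨hT0, hTc⟩)).tendsto).mono_left hleL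
      have h2 : Filter.Tendsto (fun s => u s - w s) (𝓝[Set.Ioo 0 T] T) (𝓝 0) := by
        apply Filter.Tendsto.congr' _ (tendsto_const_nhds (α := ℝ))
        filter_upwards [self_mem_nhdsWithin] with s hs
        rw [hbelow s hs.1.le hs.2, sub_self]
      have := tendsto_nhds_unique h1 h2
      linarith [this]
  have haT : derivWithin u (Set.Ico 0 c) T = derivWithin w (Set.Ico 0 c) T := by
    rcases eq_or_lt_of_le hT0 with h | h
    · rw [← h]; exact h'0
    · have hmemT : Set.Ico 0 c ∈ 𝓝 T := Ico_mem_nhds h hTc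
      have huD : HasDerivAt u (deriv u T) T :=
        (((hu1.differentiableOn one_ne_zero) T ⟨hT0, hTc⟩).differentiableAt hmemT).hasDerivAt
      have hwD : HasDerivAt w (deriv w T) T :=
        (((hw1.differentiableOn one_ne_zero) T ⟨hT0, hTc⟩).differentiableAt hmemT).hasDerivAt
      have hIoc : Set.Ioc 0 T ∈ 𝓝[Set.Iic T] T := by
        have : Set.Ioc 0 T = Set.Iic T ∩ Set.Ioi 0 := by
          ext x; simp [Set.mem_Ioc, Set.mem_Iic, Set.mem_Ioi, and_comm]
        rw [this]
        exact inter_mem_nhdsWithin _ (Ioi_mem_nhds h)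
      have hev : u =ᶠ[𝓝[Set.Iic T] T] w := by
        filter_upwards [hIoc] with s hs
        rcases eq_or_lt_of_le hs.2 with h2 | h2
        · rw [h2]; exact hwT.symm
        · exact hbelow s hs.1.le h2
      have huD2 : HasDerivWithinAt u (deriv w T) (Set.Iic T) T :=
        (hwD.hasDerivWithinAt).congr_of_eventuallyEq hev (by rw [hwT])
      have hUD : UniqueDiffWithinAt ℝ (Set.Iic T) T := uniqueDiffOn_Iic T T Set.self_mem_Iic
      have h1 : deriv u T = deriv w T := by
        have e1 := huD2.derivWithin hUD
        have e2 := (huD.hasDerivWithinAt (s := Set.Iic T)).derivWithin hUD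
        rw [← e1, ← e2]
      have e3 : derivWithin u (Set.Ico 0 c) T = deriv u T :=
        derivWithin_of_mem_nhds hmemT
      have e4 : derivWithin w (Set.Ico 0 c) T = deriv w T :=
        derivWithin_of_mem_nhds hmemT
      rw [e3, e4, h1]
  obtain ⟨b, hb, heq⟩ := LN.key hK hK' hc hu1 hw1 hwpos hueq hweq hu0 hw0 hu'
    ⟨hT0, hTc⟩ hwT haT
  obtain ⟨e, heE, heLT⟩ := exists_lt_of_csInf_lt hEne (show sInf E < min b c from
    lt_min hb hTc)
  rcases lt_trichotomy e T with h | h | h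
  · exact heE.2 (hbelow e heE.1.1 h)
  · rw [h] at heE; exact heE.2 hwT.symm
  · exact heE.2 (heq e ⟨h, lt_of_lt_of_le heLT (min_le_left _ _)⟩)
end

section
/- Let K : ℝ → ℝ be C¹ with K'(p) > 0 for all p ∈ ℝ. Let b > 0 and let u, v be real functions that are C² on (0,b) and C¹ on [0,b], satisfying u(t) ≥ v(t) > 0 for all t ∈ (0,b]. Assume that either (u'(t) > 0 and v'(t) ≥ 0 for all t ∈ (0,b]) or (u'(t) ≥ 0 and v'(t) > 0 for all t ∈ (0,b]), and that u(0) = u'(0) = 0. Assume: whenever u(t) = v(s) with 0 < t < s < b, one has K'(u'(t))·u''(t) ≤ K'(v'(s))·v''(s). Then u(t) = v(t) for all t ∈ [0,b]. -/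
open Set Filter Topology

namespace LN55

/-- Inverse function package: basic membership and right-inverse property. -/
lemma inv_spec {f : ℝ → ℝ} {b : ℝ} (hb : 0 < b) (hc : ContinuousOn f (Icc 0 b))
    {y : ℝ} (hy : y ∈ Ioo (f 0) (f b)) :
    Function.invFunOn f (Icc 0 b) y ∈ Ioo 0 b ∧ f (Function.invFunOn f (Icc 0 b) y) = y := by
  have hex : ∃ x ∈ Icc 0 b, f x = y := by
    obtain ⟨x, hx, hfx⟩ := intermediate_value_Icc hb.le hc ⟨hy.1.le, hy.2.le⟩
    exact ⟨x, hx, hfx⟩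
  have hmem := Function.invFunOn_mem hex
  have heq := Function.invFunOn_eq hex
  refine ⟨⟨lt_of_le_of_ne hmem.1 ?_, lt_of_le_of_ne hmem.2 ?_⟩, heq⟩
  · intro h; rw [← h] at heq; exact absurd heq.symm (ne_of_gt hy.1)
  · intro h; rw [h] at heq; exact absurd heq (ne_of_gt hy.2)

lemma inv_unique {f : ℝ → ℝ} {b : ℝ} (hb : 0 < b) (hc : ContinuousOn f (Icc 0 b))
    (hsm : StrictMonoOn f (Icc 0 b)) {x y : ℝ} (hx : x ∈ Icc 0 b) (hxy : f x = y)
    (hy : y ∈ Ioo (f 0) (f b)) : Function.invFunOn f (Icc 0 b) y = x := by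
  have hex : ∃ x ∈ Icc 0 b, f x = y := ⟨x, hx, hxy⟩
  exact hsm.injOn (Function.invFunOn_mem hex) hx ((Function.invFunOn_eq hex).trans hxy.symm)

lemma inv_continuousAt {f : ℝ → ℝ} {b : ℝ} (hb : 0 < b) (hc : ContinuousOn f (Icc 0 b))
    (hsm : StrictMonoOn f (Icc 0 b)) {y : ℝ} (hy : y ∈ Ioo (f 0) (f b)) :
    ContinuousAt (Function.invFunOn f (Icc 0 b)) y := by
  set g := Function.invFunOn f (Icc 0 b) with hg
  have hgmono : StrictMonoOn g (Ioo (f 0) (f b)) := by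
    intro y₁ h₁ y₂ h₂ h12
    by_contra hle
    push_neg at hle
    have h1s := inv_spec hb hc h₁
    have h2s := inv_spec hb hc h₂
    have : f (g y₂) ≤ f (g y₁) :=
      hsm.monotoneOn (Ioo_subset_Icc_self h2s.1) (Ioo_subset_Icc_self h1s.1) hle
    rw [h1s.2, h2s.2] at this
    exact absurd this (not_le.2 h12)
  have himg : g '' Ioo (f 0) (f b) = Ioo 0 b := by
    apply Subset.antisymm
    · rintro _ ⟨z, hz, rfl⟩; exact (inv_spec hb hc hz).1
    · intro x hx
      have hfx : f x ∈ Ioo (f 0) (f b) :=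
        ⟨hsm (left_mem_Icc.2 hb.le) (Ioo_subset_Icc_self hx) hx.1,
         hsm (Ioo_subset_Icc_self hx) (right_mem_Icc.2 hb.le) hx.2⟩
      exact ⟨f x, hfx, inv_unique hb hc hsm (Ioo_subset_Icc_self hx) rfl hfx⟩
  have hgy := (inv_spec hb hc hy).1
  exact hgmono.continuousAt_of_image_mem_nhds (Ioo_mem_nhds hy.1 hy.2)
    (by rw [himg]; exact Ioo_mem_nhds hgy.1 hgy.2)

lemma inv_hasDerivAt {f : ℝ → ℝ} {b : ℝ} (hb : 0 < b) (hc : ContinuousOn f (Icc 0 b))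
    (hsm : StrictMonoOn f (Icc 0 b)) {y d : ℝ} (hy : y ∈ Ioo (f 0) (f b))
    (hf : HasDerivAt f d (Function.invFunOn f (Icc 0 b) y)) (hd : d ≠ 0) :
    HasDerivAt (Function.invFunOn f (Icc 0 b)) d⁻¹ y := by
  refine HasDerivAt.of_local_left_inverse (inv_continuousAt hb hc hsm hy) hf hd ?_
  filter_upwards [Ioo_mem_nhds hy.1 hy.2] with z hz
  exact (inv_spec hb hc hz).2


noncomputable def Gfun (K : ℝ → ℝ) : ℝ → ℝ := fun p => p * K p - ∫ x in (0:ℝ)..p, K x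

lemma hasDerivAt_Gfun {K : ℝ → ℝ} (hK : ContDiff ℝ 1 K) (p : ℝ) :
    HasDerivAt (Gfun K) (p * deriv K p) p := by
  have h1 : HasDerivAt (fun q : ℝ => q * K q) (1 * K p + p * deriv K p) p :=
    (hasDerivAt_id p).mul ((hK.differentiable one_ne_zero) p).hasDerivAt
  have h2 : HasDerivAt (fun q : ℝ => ∫ x in (0:ℝ)..q, K x) (K p) p :=
    (hK.continuous.integral_hasStrictDerivAt 0 p).hasDerivAt
  have := h1.sub h2
  exact this.congr_deriv (by ring)

lemma Gfun_strictMonoOn {K : ℝ → ℝ} (hK : ContDiff ℝ 1 K) (hK' : ∀ p : ℝ, 0 < deriv K p) :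
    StrictMonoOn (Gfun K) (Ici 0) := by
  apply strictMonoOn_of_deriv_pos (convex_Ici 0)
  · exact fun x _ => ((hasDerivAt_Gfun hK x).differentiableAt).continuousAt.continuousWithinAt
  · intro x hx
    rw [interior_Ici] at hx
    rw [(hasDerivAt_Gfun hK x).deriv]
    exact mul_pos hx (hK' x)

/-- Barrier lemma: if Φ is differentiable on (0,c), has nonpositive derivative wherever
it is positive, and tends to a nonpositive limit at 0⁺, then Φ ≤ 0 on (0,c). -/
lemma barrier {c L : ℝ} {Φ : ℝ → ℝ}
    (hdiff : ∀ s ∈ Ioo 0 c, DifferentiableAt ℝ Φ s)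
    (hderiv : ∀ s ∈ Ioo 0 c, 0 < Φ s → deriv Φ s ≤ 0)
    (hL : L ≤ 0) (hlim : Tendsto Φ (𝓝[Ioo 0 c] 0) (𝓝 L)) :
    ∀ s ∈ Ioo 0 c, Φ s ≤ 0 := by
  intro s₂ hs₂
  by_contra hpos
  push_neg at hpos
  have hcont : ContinuousOn Φ (Ioo 0 c) := fun x hx => (hdiff x hx).continuousAt.continuousWithinAt
  have hNB : (𝓝[Ioo 0 c] (0:ℝ)).NeBot := by
    apply mem_closure_iff_nhdsWithin_neBot.1
    rw [closure_Ioo (ne_of_lt (lt_trans hs₂.1 hs₂.2))]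
    exact ⟨le_refl 0, (lt_trans hs₂.1 hs₂.2).le⟩
  by_cases hT : ∃ s₀ ∈ Ioc 0 s₂, Φ s₀ ≤ 0
  · obtain ⟨s₀, hs₀, hΦ₀⟩ := hT
    set T := Icc s₀ s₂ ∩ Φ ⁻¹' (Iic 0) with hTdef
    have hTsub : Icc s₀ s₂ ⊆ Ioo 0 c := fun x hx =>
      ⟨lt_of_lt_of_le hs₀.1 hx.1, lt_of_le_of_lt hx.2 hs₂.2⟩
    have hclosed : IsClosed T :=
      (hcont.mono hTsub).preimage_isClosed_of_isClosed isClosed_Icc isClosed_Iic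
    have hne : T.Nonempty := ⟨s₀, ⟨le_refl _, hs₀.2⟩, hΦ₀⟩
    have hbdd : BddAbove T := ⟨s₂, fun x hx => hx.1.2⟩
    have hs₁T : sSup T ∈ T := hclosed.csSup_mem hne hbdd
    set s₁ := sSup T with hs₁def
    have hΦ₁ : Φ s₁ ≤ 0 := hs₁T.2
    have hs₁lt : s₁ < s₂ := hs₁T.1.2.lt_of_ne (fun h => by rw [h] at hΦ₁; linarith)
    have hgt : ∀ x ∈ Ioc s₁ s₂, 0 < Φ x := by
      intro x hx
      by_contra hle
      push_neg at hle
      have hxT : x ∈ T := ⟨⟨le_trans hs₁T.1.1 hx.1.le, hx.2⟩, hle⟩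
      exact absurd (le_csSup hbdd hxT) (not_le.2 hx.1)
    have hanti : AntitoneOn Φ (Icc s₁ s₂) := by
      have hsub₁ : Icc s₁ s₂ ⊆ Ioo 0 c := fun x hx => hTsub ⟨le_trans hs₁T.1.1 hx.1, hx.2⟩
      apply antitoneOn_of_deriv_nonpos (convex_Icc _ _) (hcont.mono hsub₁)
      · intro x hx
        rw [interior_Icc] at hx
        exact (hdiff x (hsub₁ (Ioo_subset_Icc_self hx))).differentiableWithinAt
      · intro x hx
        rw [interior_Icc] at hx
        exact hderiv x (hsub₁ (Ioo_subset_Icc_self hx)) (hgt x ⟨hx.1, hx.2.le⟩)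
    have := hanti (left_mem_Icc.2 hs₁lt.le) (right_mem_Icc.2 hs₁lt.le) hs₁lt.le
    linarith
  · push_neg at hT
    have hev : ∀ᶠ x in 𝓝[Ioo 0 c] (0:ℝ), Φ s₂ ≤ Φ x := by
      filter_upwards [self_mem_nhdsWithin,
        eventually_nhdsWithin_of_eventually_nhds (eventually_lt_nhds hs₂.1)] with x hx hxs₂
      have hanti : AntitoneOn Φ (Icc x s₂) := by
        have hsub₁ : Icc x s₂ ⊆ Ioo 0 c := fun z hz =>
          ⟨lt_of_lt_of_le hx.1 hz.1, lt_of_le_of_lt hz.2 hs₂.2⟩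
        apply antitoneOn_of_deriv_nonpos (convex_Icc _ _) (hcont.mono hsub₁)
        · intro z hz
          rw [interior_Icc] at hz
          exact (hdiff z (hsub₁ (Ioo_subset_Icc_self hz))).differentiableWithinAt
        · intro z hz
          rw [interior_Icc] at hz
          exact hderiv z (hsub₁ (Ioo_subset_Icc_self hz))
            (hT z ⟨lt_trans hx.1 hz.1, hz.2.le⟩)
      exact hanti (left_mem_Icc.2 hxs₂.le) (right_mem_Icc.2 hxs₂.le) hxs₂.le
    have : Φ s₂ ≤ L := ge_of_tendsto hlim hev
    linarith


lemma contact {u v : ℝ → ℝ} {b x : ℝ} (hx : x ∈ Ioo 0 b)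
    (hud : DifferentiableAt ℝ u x) (hvd : DifferentiableAt ℝ v x)
    (hge : ∀ t ∈ Ioo 0 b, v t ≤ u t) (heq : u x = v x) : deriv u x = deriv v x := by
  have hmin : IsLocalMin (fun t => u t - v t) x := by
    filter_upwards [isOpen_Ioo.eventually_mem hx] with y hy
    have := hge y hy
    simp only [heq]
    linarith [sub_self (v x)]
  have h0 := hmin.deriv_eq_zero
  rw [deriv_fun_sub hud hvd] at h0
  linarith

lemma final_step {u v : ℝ → ℝ} {b : ℝ} (hb : 0 < b)
    (hu1 : ContinuousOn u (Icc 0 b)) (hv1 : ContinuousOn v (Icc 0 b))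
    (hu0 : u 0 = 0) (hv0 : v 0 = 0)
    (hIoo : ∀ x ∈ Ioo 0 b, u x = v x) : ∀ t ∈ Icc 0 b, u t = v t := by
  intro t ht
  rcases eq_or_lt_of_le ht.1 with h0 | h0
  · rw [← h0, hu0, hv0]
  rcases eq_or_lt_of_le ht.2 with hb' | hb'
  · rw [hb']
    have hNB : (𝓝[Ioo 0 b] b).NeBot := by
      apply mem_closure_iff_nhdsWithin_neBot.1
      rw [closure_Ioo hb.ne]
      exact ⟨hb.le, le_refl b⟩
    have h1 : Tendsto u (𝓝[Ioo 0 b] b) (𝓝 (u b)) :=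
      ((hu1 b ⟨hb.le, le_refl b⟩).mono Ioo_subset_Icc_self)
    have h2 : Tendsto v (𝓝[Ioo 0 b] b) (𝓝 (v b)) :=
      ((hv1 b ⟨hb.le, le_refl b⟩).mono Ioo_subset_Icc_self)
    have h3 : Tendsto u (𝓝[Ioo 0 b] b) (𝓝 (v b)) :=
      h2.congr' (Filter.eventually_of_mem self_mem_nhdsWithin (fun x hx => (hIoo x hx).symm))
    exact tendsto_nhds_unique h1 h3
  · exact hIoo t ⟨h0, hb'⟩

lemma deriv_tendsto {f : ℝ → ℝ} {b : ℝ} (hb : 0 < b) (hf1 : ContDiffOn ℝ 1 f (Icc 0 b))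
    {l : Filter ℝ} {τ : ℝ → ℝ} (hτ : Tendsto τ l (𝓝 0)) (hmem : ∀ᶠ s in l, τ s ∈ Ioo 0 b) :
    Tendsto (fun s => deriv f (τ s)) l (𝓝 (derivWithin f (Icc 0 b) 0)) := by
  have hcont : ContinuousOn (derivWithin f (Icc 0 b)) (Icc 0 b) :=
    hf1.continuousOn_derivWithin (uniqueDiffOn_Icc hb) le_rfl
  have h0 : ContinuousWithinAt (derivWithin f (Icc 0 b)) (Icc 0 b) 0 :=
    hcont 0 (left_mem_Icc.2 hb.le)
  have hτ' : Tendsto τ l (𝓝[Icc 0 b] 0) :=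
    tendsto_nhdsWithin_iff.2 ⟨hτ, hmem.mono fun s hs => Ioo_subset_Icc_self hs⟩
  exact (h0.tendsto.comp hτ').congr'
    (hmem.mono fun s hs => derivWithin_of_mem_nhds (Icc_mem_nhds hs.1 hs.2))


end LN55

open Set Filter Topology LN55
/-- Lemma 5.5 of Li–Nirenberg, extending Lemma 3.1. -/
theorem stmt_14 (K : ℝ → ℝ) (hK : ContDiff ℝ 1 K) (hK' : ∀ p : ℝ, 0 < deriv K p)
    (b : ℝ) (hb : 0 < b) (u v : ℝ → ℝ)
    (hu2 : ContDiffOn ℝ 2 u (Set.Ioo 0 b)) (hv2 : ContDiffOn ℝ 2 v (Set.Ioo 0 b))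
    (hu1 : ContDiffOn ℝ 1 u (Set.Icc 0 b)) (hv1 : ContDiffOn ℝ 1 v (Set.Icc 0 b))
    (huv : ∀ t ∈ Set.Ioc 0 b, 0 < v t ∧ v t ≤ u t)
    (hmono : (∀ t ∈ Set.Ioc 0 b, 0 < deriv u t ∧ 0 ≤ deriv v t) ∨
      (∀ t ∈ Set.Ioc 0 b, 0 ≤ deriv u t ∧ 0 < deriv v t))
    (hu0 : u 0 = 0) (hu'0 : derivWithin u (Set.Icc 0 b) 0 = 0)
    (hmain : ∀ t s : ℝ, 0 < t → t < s → s < b → u t = v s →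
      deriv K (deriv u t) * deriv (deriv u) t ≤ deriv K (deriv v s) * deriv (deriv v) s) :
    ∀ t ∈ Set.Icc 0 b, u t = v t := by
  have ucont : ContinuousOn u (Icc 0 b) := hu1.continuousOn
  have vcont : ContinuousOn v (Icc 0 b) := hv1.continuousOn
  have hNB0 : (𝓝[Ioo 0 b] (0:ℝ)).NeBot := by
    apply mem_closure_iff_nhdsWithin_neBot.1
    rw [closure_Ioo hb.ne]
    exact ⟨le_refl _, hb.le⟩
  have hvtend : Tendsto v (𝓝[Ioo 0 b] 0) (𝓝 (v 0)) :=
    (vcont 0 ⟨le_refl _, hb.le⟩).mono Ioo_subset_Icc_self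
  have hutend : Tendsto u (𝓝[Ioo 0 b] 0) (𝓝 (u 0)) :=
    (ucont 0 ⟨le_refl _, hb.le⟩).mono Ioo_subset_Icc_self
  have hv0 : v 0 = 0 := by
    have hge : v 0 ≤ u 0 := le_of_tendsto_of_tendsto hvtend hutend
      (Filter.eventually_of_mem self_mem_nhdsWithin fun x hx => (huv x ⟨hx.1, hx.2.le⟩).2)
    have hge0 : 0 ≤ v 0 := ge_of_tendsto hvtend
      (Filter.eventually_of_mem self_mem_nhdsWithin fun x hx => (huv x ⟨hx.1, hx.2.le⟩).1.le)
    rw [hu0] at hge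
    linarith
  have hu'nonneg : ∀ x ∈ Ioo 0 b, 0 ≤ deriv u x := by
    rcases hmono with hm | hm
    · exact fun x hx => (hm x ⟨hx.1, hx.2.le⟩).1.le
    · exact fun x hx => (hm x ⟨hx.1, hx.2.le⟩).1
  have hv'nonneg : ∀ x ∈ Ioo 0 b, 0 ≤ deriv v x := by
    rcases hmono with hm | hm
    · exact fun x hx => (hm x ⟨hx.1, hx.2.le⟩).2
    · exact fun x hx => (hm x ⟨hx.1, hx.2.le⟩).2.le
  have udiff : ∀ x ∈ Ioo 0 b, DifferentiableAt ℝ u x := fun x hx =>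
    ((hu2.differentiableOn (by norm_num)) x hx).differentiableAt (isOpen_Ioo.mem_nhds hx)
  have vdiff : ∀ x ∈ Ioo 0 b, DifferentiableAt ℝ v x := fun x hx =>
    ((hv2.differentiableOn (by norm_num)) x hx).differentiableAt (isOpen_Ioo.mem_nhds hx)
  have du : ∀ x ∈ Ioo 0 b, DifferentiableAt ℝ (deriv u) x := by
    intro x hx
    have h1 : ContDiffOn ℝ 1 (deriv u) (Ioo 0 b) := hu2.deriv_of_isOpen isOpen_Ioo (by norm_num)
    exact ((h1.differentiableOn one_ne_zero) x hx).differentiableAt (isOpen_Ioo.mem_nhds hx)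
  have dv : ∀ x ∈ Ioo 0 b, DifferentiableAt ℝ (deriv v) x := by
    intro x hx
    have h1 : ContDiffOn ℝ 1 (deriv v) (Ioo 0 b) := hv2.deriv_of_isOpen isOpen_Ioo (by norm_num)
    exact ((h1.differentiableOn one_ne_zero) x hx).differentiableAt (isOpen_Ioo.mem_nhds hx)
  have hidt : Tendsto (fun s : ℝ => s) (𝓝[Ioo 0 b] 0) (𝓝 0) :=
    tendsto_id.mono_left nhdsWithin_le_nhds
  have hq0 : 0 ≤ derivWithin v (Icc 0 b) 0 := by
    have h2 : Tendsto (fun s => deriv v s) (𝓝[Ioo 0 b] 0) (𝓝 (derivWithin v (Icc 0 b) 0)) :=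
      deriv_tendsto hb hv1 hidt (Filter.eventually_of_mem self_mem_nhdsWithin fun x hx => hx)
    exact ge_of_tendsto h2
      (Filter.eventually_of_mem self_mem_nhdsWithin fun x hx => hv'nonneg x hx)
  have hGmono := Gfun_strictMonoOn hK hK'
  have hGdiff : Differentiable ℝ (Gfun K) := fun p => (hasDerivAt_Gfun hK p).differentiableAt
  have hGcont : Continuous (Gfun K) := hGdiff.continuous
  have hL0 : Gfun K 0 - Gfun K (derivWithin v (Icc 0 b) 0) ≤ 0 := by
    have := hGmono.monotoneOn (mem_Ici.2 le_rfl) (mem_Ici.2 hq0) hq0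
    linarith
  rcases hmono with hm | hm
  · -- Case 1 : u' > 0, v' ≥ 0
    have usm : StrictMonoOn u (Icc 0 b) :=
      strictMonoOn_of_deriv_pos (convex_Icc 0 b) ucont (fun x hx => by
        rw [interior_Icc] at hx; exact (hm x ⟨hx.1, hx.2.le⟩).1)
    set g := Function.invFunOn u (Icc 0 b) with hgdef
    have hyIoo : ∀ s ∈ Ioo 0 b, v s ∈ Ioo (u 0) (u b) := by
      intro s hs
      constructor
      · rw [hu0]; exact (huv s ⟨hs.1, hs.2.le⟩).1
      · exact lt_of_le_of_lt (huv s ⟨hs.1, hs.2.le⟩).2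
          (usm (Ioo_subset_Icc_self hs) (right_mem_Icc.2 hb.le) hs.2)
    set τ := fun s => g (v s) with hτdef
    have hτmem : ∀ s ∈ Ioo 0 b, τ s ∈ Ioo 0 b := fun s hs => (inv_spec hb ucont (hyIoo s hs)).1
    have hτeq : ∀ s ∈ Ioo 0 b, u (τ s) = v s := fun s hs => (inv_spec hb ucont (hyIoo s hs)).2
    have hτle : ∀ s ∈ Ioo 0 b, τ s ≤ s := by
      intro s hs
      by_contra hlt
      push_neg at hlt
      have h2 := usm (Ioo_subset_Icc_self hs) (Ioo_subset_Icc_self (hτmem s hs)) hlt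
      rw [hτeq s hs] at h2
      exact absurd h2 (not_lt.2 (huv s ⟨hs.1, hs.2.le⟩).2)
    have hppos : ∀ s ∈ Ioo 0 b, 0 < deriv u (τ s) := fun s hs =>
      (hm (τ s) ⟨(hτmem s hs).1, (hτmem s hs).2.le⟩).1
    have hτderiv : ∀ s ∈ Ioo 0 b, HasDerivAt τ ((deriv u (τ s))⁻¹ * deriv v s) s := by
      intro s hs
      have hgd : HasDerivAt g (deriv u (τ s))⁻¹ (v s) :=
        inv_hasDerivAt hb ucont usm (hyIoo s hs)
          ((udiff (τ s) (hτmem s hs)).hasDerivAt) (ne_of_gt (hppos s hs))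
      exact hgd.comp s ((vdiff s hs).hasDerivAt)
    have hτ0 : Tendsto τ (𝓝[Ioo 0 b] 0) (𝓝 0) := by
      apply tendsto_of_tendsto_of_tendsto_of_le_of_le' tendsto_const_nhds hidt
      · exact Filter.eventually_of_mem self_mem_nhdsWithin fun s hs => (hτmem s hs).1.le
      · exact Filter.eventually_of_mem self_mem_nhdsWithin fun s hs => hτle s hs
    have hput : Tendsto (fun s => deriv u (τ s)) (𝓝[Ioo 0 b] 0) (𝓝 0) := by
      have := deriv_tendsto hb hu1 hτ0
        (Filter.eventually_of_mem self_mem_nhdsWithin fun s hs => hτmem s hs)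
      rwa [hu'0] at this
    have hqvt : Tendsto (fun s => deriv v s) (𝓝[Ioo 0 b] 0) (𝓝 (derivWithin v (Icc 0 b) 0)) :=
      deriv_tendsto hb hv1 hidt (Filter.eventually_of_mem self_mem_nhdsWithin fun x hx => hx)
    set Φ := fun s => Gfun K (deriv u (τ s)) - Gfun K (deriv v s) with hΦdef
    have hΦderiv : ∀ s ∈ Ioo 0 b, HasDerivAt Φ
        ((deriv K (deriv u (τ s)) * deriv (deriv u) (τ s)
          - deriv K (deriv v s) * deriv (deriv v) s) * deriv v s) s := by
      intro s hs
      have h1 : HasDerivAt (fun s => deriv u (τ s))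
          (deriv (deriv u) (τ s) * ((deriv u (τ s))⁻¹ * deriv v s)) s :=
        ((du (τ s) (hτmem s hs)).hasDerivAt).comp s (hτderiv s hs)
      have h2 : HasDerivAt (fun s => Gfun K (deriv u (τ s)))
          (deriv u (τ s) * deriv K (deriv u (τ s)) *
            (deriv (deriv u) (τ s) * ((deriv u (τ s))⁻¹ * deriv v s))) s :=
        (hasDerivAt_Gfun hK _).comp s h1
      have h4 : HasDerivAt (fun s => Gfun K (deriv v s))
          (deriv v s * deriv K (deriv v s) * deriv (deriv v) s) s :=
        (hasDerivAt_Gfun hK _).comp s ((dv s hs).hasDerivAt)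
      have h5 := h2.sub h4
      refine h5.congr_deriv ?_
      have hp := ne_of_gt (hppos s hs)
      have hpp : deriv u (τ s) * (deriv u (τ s))⁻¹ = 1 := mul_inv_cancel₀ hp
      linear_combination (deriv K (deriv u (τ s)) * deriv (deriv u) (τ s) * deriv v s) * hpp
    have hΦle : ∀ s ∈ Ioo 0 b, Φ s ≤ 0 := by
      apply barrier (fun s hs => (hΦderiv s hs).differentiableAt) ?_ hL0 ?_
      · intro s hs hpos
        have hq : 0 ≤ deriv v s := hv'nonneg s hs
        have hp := hppos s hs
        have hqltp : deriv v s < deriv u (τ s) := by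
          by_contra hle
          push_neg at hle
          have h6 := hGmono.monotoneOn (mem_Ici.2 hp.le) (mem_Ici.2 hq) hle
          simp only [hΦdef] at hpos
          linarith
        have hτlt : τ s < s := by
          rcases (hτle s hs).lt_or_eq with h | h
          · exact h
          · exfalso
            have hus : u s = v s := by
              have h10 := hτeq s hs
              rw [h] at h10
              exact h10
            have hc := contact hs (udiff s hs) (vdiff s hs)
              (fun t ht => (huv t ⟨ht.1, ht.2.le⟩).2) hus
            rw [h] at hqltp
            linarith
        have hAB := hmain (τ s) s (hτmem s hs).1 hτlt hs.2 (hτeq s hs)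
        rw [(hΦderiv s hs).deriv]
        exact mul_nonpos_of_nonpos_of_nonneg (sub_nonpos.2 hAB) hq
      · exact (((hGcont.tendsto 0).comp hput).sub
          ((hGcont.tendsto _).comp hqvt))
    have hple : ∀ s ∈ Ioo 0 b, deriv u (τ s) ≤ deriv v s := by
      intro s hs
      by_contra hlt
      push_neg at hlt
      have h6 := hGmono (mem_Ici.2 (hv'nonneg s hs)) (mem_Ici.2 (hppos s hs).le) hlt
      have h7 := hΦle s hs
      simp only [hΦdef] at h7
      linarith
    set h := fun s => s - τ s with hhdef
    have hhderiv : ∀ s ∈ Ioo 0 b, HasDerivAt h (1 - (deriv u (τ s))⁻¹ * deriv v s) s :=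
      fun s hs => (hasDerivAt_id s).sub (hτderiv s hs)
    have hhle : ∀ s ∈ Ioo 0 b, h s ≤ 0 := by
      apply barrier (fun s hs => (hhderiv s hs).differentiableAt) ?_ le_rfl ?_
      · intro s hs _
        rw [(hhderiv s hs).deriv]
        have hp := hppos s hs
        have h8 : 1 ≤ (deriv u (τ s))⁻¹ * deriv v s := by
          rw [← div_eq_inv_mul]
          exact (one_le_div hp).2 (hple s hs)
        linarith
      · have h9 := hidt.sub hτ0
        simpa using h9
    have hIoo : ∀ x ∈ Ioo 0 b, u x = v x := by
      intro x hx
      have h1 : τ x = x := le_antisymm (hτle x hx) (by have := hhle x hx; simp only [hhdef] at this; linarith)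
      rw [← hτeq x hx, h1]
    exact final_step hb ucont vcont hu0 hv0 hIoo
  · -- Case 2 : u' ≥ 0, v' > 0
    have vsm : StrictMonoOn v (Icc 0 b) :=
      strictMonoOn_of_deriv_pos (convex_Icc 0 b) vcont (fun x hx => by
        rw [interior_Icc] at hx; exact (hm x ⟨hx.1, hx.2.le⟩).2)
    have uMono : MonotoneOn u (Icc 0 b) := by
      apply monotoneOn_of_deriv_nonneg (convex_Icc 0 b) ucont
      · rw [interior_Icc]
        exact fun x hx => (udiff x hx).differentiableWithinAt
      · intro x hx
        rw [interior_Icc] at hx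
        exact hu'nonneg x hx
    have hvb : 0 < v b := (huv b ⟨hb, le_refl _⟩).1
    set g := Function.invFunOn v (Icc 0 b) with hgdef
    set E := Ioo 0 b ∩ u ⁻¹' (Iio (v b)) with hEdef
    have hEnonempty : E.Nonempty := by
      have hev : ∀ᶠ x in 𝓝[Ioo 0 b] 0, u x < v b :=
        hutend.eventually (eventually_lt_nhds (by rw [hu0]; exact hvb))
      obtain ⟨x, hx1, hx2⟩ := (hev.and self_mem_nhdsWithin).exists
      exact ⟨x, hx2, hx1⟩
    have hbddE : BddAbove E := ⟨b, fun x hx => hx.1.2.le⟩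
    set c := sSup E with hcdef
    obtain ⟨x₀, hx₀⟩ := hEnonempty
    have hc0 : 0 < c := lt_of_lt_of_le hx₀.1.1 (le_csSup hbddE hx₀)
    have hcb : c ≤ b := csSup_le ⟨x₀, hx₀⟩ (fun x hx => hx.1.2.le)
    have hIoosub : ∀ t ∈ Ioo 0 c, t ∈ E := by
      intro t ht
      obtain ⟨e, heE, hte⟩ := exists_lt_of_lt_csSup ⟨x₀, hx₀⟩ ht.2
      have htb : t ∈ Ioo 0 b := ⟨ht.1, lt_trans hte heE.1.2⟩
      refine ⟨htb, ?_⟩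
      have h2 := uMono (Ioo_subset_Icc_self htb) (Ioo_subset_Icc_self heE.1) hte.le
      exact lt_of_le_of_lt h2 heE.2
    have hvIoo : ∀ t ∈ Ioo 0 c, u t ∈ Ioo (v 0) (v b) := by
      intro t ht
      have htb : t ∈ Ioo 0 b := (hIoosub t ht).1
      constructor
      · rw [hv0]
        exact lt_of_lt_of_le (huv t ⟨htb.1, htb.2.le⟩).1 (huv t ⟨htb.1, htb.2.le⟩).2
      · exact (hIoosub t ht).2
    set σ := fun t => g (u t) with hσdef
    have hσmem : ∀ t ∈ Ioo 0 c, σ t ∈ Ioo 0 b := fun t ht => (inv_spec hb vcont (hvIoo t ht)).1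
    have hσeq : ∀ t ∈ Ioo 0 c, v (σ t) = u t := fun t ht => (inv_spec hb vcont (hvIoo t ht)).2
    have hσge : ∀ t ∈ Ioo 0 c, t ≤ σ t := by
      intro t ht
      by_contra hlt
      push_neg at hlt
      have htb := (hIoosub t ht).1
      have h2 := vsm (Ioo_subset_Icc_self (hσmem t ht)) (Ioo_subset_Icc_self htb) hlt
      rw [hσeq t ht] at h2
      exact absurd h2 (not_lt.2 (huv t ⟨htb.1, htb.2.le⟩).2)
    have hqpos : ∀ t ∈ Ioo 0 c, 0 < deriv v (σ t) := fun t ht =>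
      (hm (σ t) ⟨(hσmem t ht).1, (hσmem t ht).2.le⟩).2
    have hσderiv : ∀ t ∈ Ioo 0 c, HasDerivAt σ ((deriv v (σ t))⁻¹ * deriv u t) t := by
      intro t ht
      have hgd : HasDerivAt g (deriv v (σ t))⁻¹ (u t) :=
        inv_hasDerivAt hb vcont vsm (hvIoo t ht)
          ((vdiff (σ t) (hσmem t ht)).hasDerivAt) (ne_of_gt (hqpos t ht))
      exact hgd.comp t ((udiff t (hIoosub t ht).1).hasDerivAt)
    have hminor : 𝓝[Ioo 0 c] (0:ℝ) ≤ 𝓝[Ioo 0 b] 0 :=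
      nhdsWithin_mono _ (Ioo_subset_Ioo le_rfl hcb)
    have hidtc : Tendsto (fun t : ℝ => t) (𝓝[Ioo 0 c] 0) (𝓝 0) :=
      tendsto_id.mono_left nhdsWithin_le_nhds
    have hσ0 : Tendsto σ (𝓝[Ioo 0 c] 0) (𝓝 0) := by
      rw [tendsto_order]
      constructor
      · intro a ha
        exact Filter.eventually_of_mem self_mem_nhdsWithin fun t ht =>
          lt_trans ha (hσmem t ht).1
      · intro ε hε
        have hδ : 0 < min ε b := lt_min hε hb
        have hδb : min ε b ≤ b := min_le_right _ _
        have hvδ : 0 < v (min ε b) := (huv _ ⟨hδ, hδb⟩).1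
        have hev : ∀ᶠ t in 𝓝[Ioo 0 c] 0, u t < v (min ε b) :=
          (hutend.mono_left hminor).eventually (eventually_lt_nhds (by rw [hu0]; exact hvδ))
        filter_upwards [hev, self_mem_nhdsWithin] with t h1 h2
        have h3 : v (σ t) < v (min ε b) := by rw [hσeq t h2]; exact h1
        have h4 : σ t < min ε b := by
          by_contra hge'
          push_neg at hge'
          have h5 := vsm.monotoneOn ⟨hδ.le, hδb⟩ (Ioo_subset_Icc_self (hσmem t h2)) hge'
          linarith
        exact lt_of_lt_of_le h4 (min_le_left _ _)
    have hσIoo : ∀ᶠ t in 𝓝[Ioo 0 c] 0, σ t ∈ Ioo 0 b :=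
      Filter.eventually_of_mem self_mem_nhdsWithin fun t ht => hσmem t ht
    have hput : Tendsto (fun t => deriv u t) (𝓝[Ioo 0 c] 0) (𝓝 0) := by
      have h6 := deriv_tendsto hb hu1 hidtc
        (Filter.eventually_of_mem self_mem_nhdsWithin fun t ht => (hIoosub t ht).1)
      rwa [hu'0] at h6
    have hqvt : Tendsto (fun t => deriv v (σ t)) (𝓝[Ioo 0 c] 0)
        (𝓝 (derivWithin v (Icc 0 b) 0)) := deriv_tendsto hb hv1 hσ0 hσIoo
    set Φ := fun t => Gfun K (deriv u t) - Gfun K (deriv v (σ t)) with hΦdef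
    have hΦderiv : ∀ t ∈ Ioo 0 c, HasDerivAt Φ
        ((deriv K (deriv u t) * deriv (deriv u) t
          - deriv K (deriv v (σ t)) * deriv (deriv v) (σ t)) * deriv u t) t := by
      intro t ht
      have htb := (hIoosub t ht).1
      have h1 : HasDerivAt (fun t => deriv v (σ t))
          (deriv (deriv v) (σ t) * ((deriv v (σ t))⁻¹ * deriv u t)) t :=
        ((dv (σ t) (hσmem t ht)).hasDerivAt).comp t (hσderiv t ht)
      have h2 : HasDerivAt (fun t => Gfun K (deriv v (σ t)))
          (deriv v (σ t) * deriv K (deriv v (σ t)) *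
            (deriv (deriv v) (σ t) * ((deriv v (σ t))⁻¹ * deriv u t))) t :=
        (hasDerivAt_Gfun hK _).comp t h1
      have h4 : HasDerivAt (fun t => Gfun K (deriv u t))
          (deriv u t * deriv K (deriv u t) * deriv (deriv u) t) t :=
        (hasDerivAt_Gfun hK _).comp t ((du t htb).hasDerivAt)
      have h5 := h4.sub h2
      refine h5.congr_deriv ?_
      have hq := ne_of_gt (hqpos t ht)
      have hqq : deriv v (σ t) * (deriv v (σ t))⁻¹ = 1 := mul_inv_cancel₀ hq
      linear_combination (-(deriv K (deriv v (σ t)) * deriv (deriv v) (σ t) * deriv u t)) * hqq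
    have hΦle : ∀ t ∈ Ioo 0 c, Φ t ≤ 0 := by
      apply barrier (fun t ht => (hΦderiv t ht).differentiableAt) ?_ hL0 ?_
      · intro t ht hpos
        have htb := (hIoosub t ht).1
        have hq := hqpos t ht
        have hp : 0 ≤ deriv u t := hu'nonneg t htb
        have hqltp : deriv v (σ t) < deriv u t := by
          by_contra hle
          push_neg at hle
          have h6 := hGmono.monotoneOn (mem_Ici.2 hp) (mem_Ici.2 hq.le) hle
          simp only [hΦdef] at hpos
          linarith
        have hσgt : t < σ t := by
          rcases (hσge t ht).lt_or_eq with h' | h'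
          · exact h'
          · exfalso
            have hus : u t = v t := by
              have h10 := hσeq t ht
              rw [← h'] at h10
              exact h10.symm
            have hc' := contact htb (udiff t htb) (vdiff t htb)
              (fun z hz => (huv z ⟨hz.1, hz.2.le⟩).2) hus
            rw [← h'] at hqltp
            linarith
        have hAB := hmain t (σ t) ht.1 hσgt (hσmem t ht).2 (hσeq t ht).symm
        rw [(hΦderiv t ht).deriv]
        exact mul_nonpos_of_nonpos_of_nonneg (sub_nonpos.2 hAB) hp
      · exact ((hGcont.tendsto 0).comp hput).sub ((hGcont.tendsto _).comp hqvt)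
    have hple : ∀ t ∈ Ioo 0 c, deriv u t ≤ deriv v (σ t) := by
      intro t ht
      by_contra hlt
      push_neg at hlt
      have h6 := hGmono (mem_Ici.2 (hqpos t ht).le)
        (mem_Ici.2 (hu'nonneg t (hIoosub t ht).1)) hlt
      have h7 := hΦle t ht
      simp only [hΦdef] at h7
      linarith
    set h := fun t => σ t - t with hhdef
    have hhderiv : ∀ t ∈ Ioo 0 c, HasDerivAt h ((deriv v (σ t))⁻¹ * deriv u t - 1) t :=
      fun t ht => (hσderiv t ht).sub (hasDerivAt_id t)
    have hhle : ∀ t ∈ Ioo 0 c, h t ≤ 0 := by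
      apply barrier (fun t ht => (hhderiv t ht).differentiableAt) ?_ le_rfl ?_
      · intro t ht _
        rw [(hhderiv t ht).deriv]
        have hq := hqpos t ht
        have h8 : (deriv v (σ t))⁻¹ * deriv u t ≤ 1 := by
          rw [← div_eq_inv_mul]
          exact (div_le_one hq).2 (hple t ht)
        linarith
      · have h9 := hσ0.sub hidtc
        simpa using h9
    have hIoc : ∀ x ∈ Ioo 0 c, u x = v x := by
      intro x hx
      have h1 : σ x = x := le_antisymm
        (by have := hhle x hx; simp only [hhdef] at this; linarith) (hσge x hx)
      rw [← hσeq x hx, h1]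
    have hcb' : c = b := by
      by_contra hne
      have hlt : c < b := lt_of_le_of_ne hcb hne
      have hcIoo : c ∈ Ioo 0 b := ⟨hc0, hlt⟩
      have hucv : u c = v c := by
        have hNBcc : (𝓝[Ioo 0 c] c).NeBot := by
          apply mem_closure_iff_nhdsWithin_neBot.1
          rw [closure_Ioo hc0.ne]
          exact ⟨hc0.le, le_refl _⟩
        have h1 : Tendsto u (𝓝[Ioo 0 c] c) (𝓝 (u c)) :=
          ((udiff c hcIoo).continuousAt.continuousWithinAt)
        have h2 : Tendsto v (𝓝[Ioo 0 c] c) (𝓝 (v c)) :=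
          ((vdiff c hcIoo).continuousAt.continuousWithinAt)
        exact tendsto_nhds_unique h1 (h2.congr'
          (Filter.eventually_of_mem self_mem_nhdsWithin fun x hx => (hIoc x hx).symm))
      have hucb : v b ≤ u c := by
        by_contra hlt2
        push_neg at hlt2
        have hev1 : ∀ᶠ x in 𝓝[>] c, u x < v b :=
          ((udiff c hcIoo).continuousAt.eventually (eventually_lt_nhds hlt2)).filter_mono
            nhdsWithin_le_nhds
        have hev2 : ∀ᶠ x in 𝓝[>] c, x < b :=
          eventually_nhdsWithin_of_eventually_nhds (eventually_lt_nhds hlt)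
        obtain ⟨x, hx1, hx2, hx3⟩ := (hev1.and (hev2.and self_mem_nhdsWithin)).exists
        have hxE : x ∈ E := ⟨⟨lt_trans hc0 hx3, hx2⟩, hx1⟩
        exact absurd (le_csSup hbddE hxE) (not_le.2 hx3)
      have hvcb : v c < v b := vsm (Ioo_subset_Icc_self hcIoo) (right_mem_Icc.2 hb.le) hlt
      rw [← hucv] at hvcb
      linarith
    have hIoo : ∀ x ∈ Ioo 0 b, u x = v x := by
      rw [← hcb']
      exact hIoc
    exact final_step hb ucont vcont hu0 hv0 hIoo
end

section
/- There exists ε₀ > 0 such that for every ε ∈ (0, ε₀) the following holds: define u(t) = ε⁶ t³(1−t)³ and v(t) = ε³ t³(1−t)³. Then whenever 0 < t < 1/2, 0 < s < 1/2, and u(t) = v(s), one has u''(t)/(1+u'(t)²)^{3/2} ≤ v''(s)/(1+v'(s)²)^{3/2}. -/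
private lemma hd1 (c x : ℝ) :
    HasDerivAt (fun y : ℝ => c * y ^ 3 * (1 - y) ^ 3)
      (c * (3 * x ^ 2 - 12 * x ^ 3 + 15 * x ^ 4 - 6 * x ^ 5)) x := by
  have h := ((hasDerivAt_pow 3 x).const_mul c).mul
    (((hasDerivAt_id x).const_sub 1).pow 3)
  refine h.congr_deriv ?_
  push_cast
  simp only [id_eq, Pi.pow_apply]
  ring

private lemma hd2 (c x : ℝ) :
    HasDerivAt (fun y : ℝ => c * (3 * y ^ 2 - 12 * y ^ 3 + 15 * y ^ 4 - 6 * y ^ 5))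
      (c * (6 * x - 36 * x ^ 2 + 60 * x ^ 3 - 30 * x ^ 4)) x := by
  have h := (((((hasDerivAt_pow 2 x).const_mul 3).sub
      ((hasDerivAt_pow 3 x).const_mul 12)).add
      ((hasDerivAt_pow 4 x).const_mul 15)).sub
      ((hasDerivAt_pow 5 x).const_mul 6)).const_mul c
  refine h.congr_deriv ?_
  push_cast
  ring

private lemma LN_deriv_eq (c : ℝ) (w : ℝ → ℝ)
    (hw : ∀ x : ℝ, w x = c * x ^ 3 * (1 - x) ^ 3) :
    deriv w = fun x => c * (3 * x ^ 2 - 12 * x ^ 3 + 15 * x ^ 4 - 6 * x ^ 5) := by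
  have hweq : w = fun y : ℝ => c * y ^ 3 * (1 - y) ^ 3 := funext hw
  funext x
  rw [hweq]
  exact (hd1 c x).deriv

private lemma rpow_32_le_3 : (2 : ℝ) ^ ((3 : ℝ) / 2) ≤ 3 := by
  have h2 : ((2 : ℝ) ^ ((3 : ℝ) / 2)) ^ 2 = 8 := by
    rw [← Real.rpow_natCast ((2:ℝ) ^ ((3:ℝ)/2)) 2, ← Real.rpow_mul (by norm_num)]
    norm_num
  nlinarith [Real.rpow_nonneg (by norm_num : (0:ℝ) ≤ 2) ((3:ℝ)/2)]

set_option maxHeartbeats 1600000 in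
/-- The Claim (4.16) in Section 6 of Li–Nirenberg: the key computation in the
counterexample to Question 1.2. -/
theorem stmt_16 : ∃ ε₀ : ℝ, 0 < ε₀ ∧ ∀ ε : ℝ, 0 < ε → ε < ε₀ →
    ∀ u v : ℝ → ℝ,
      (∀ x : ℝ, u x = ε ^ 6 * x ^ 3 * (1 - x) ^ 3) →
      (∀ x : ℝ, v x = ε ^ 3 * x ^ 3 * (1 - x) ^ 3) →
      ∀ t s : ℝ, 0 < t → t < 1 / 2 → 0 < s → s < 1 / 2 → u t = v s →
        deriv (deriv u) t / (1 + (deriv u t) ^ 2) ^ ((3 : ℝ) / 2) ≤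
          deriv (deriv v) s / (1 + (deriv v s) ^ 2) ^ ((3 : ℝ) / 2) := by
  refine ⟨1/10, by norm_num, ?_⟩
  intro ε hε hε1 u v hu hv t s ht0 ht2 hs0 hs2 huv
  have hdu := LN_deriv_eq (ε ^ 6) u hu
  have hdv := LN_deriv_eq (ε ^ 3) v hv
  rw [hdu, hdv, (hd2 (ε ^ 6) t).deriv, (hd2 (ε ^ 3) s).deriv]
  rw [hu t, hv s] at huv
  have hεne : ε ≠ 0 := ne_of_gt hε
  -- key relation : ε * (t * (1-t)) = s * (1-s)
  have key : ε * (t * (1 - t)) = s * (1 - s) := by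
    have h0 : (ε ^ 2 * (t * (1 - t))) ^ 3 = (ε * (s * (1 - s))) ^ 3 := by
      linear_combination huv
    have h1 := (Odd.strictMono_pow (R := ℝ) (by decide : Odd 3)).injective h0
    apply mul_left_cancel₀ hεne
    linear_combination h1
  have ht4 : t * (1 - t) ≤ 1 / 4 := by nlinarith
  have httpos : 0 < t * (1 - t) := by nlinarith
  have hs20 : s < 1 / 20 := by
    nlinarith [mul_le_mul_of_nonneg_left ht4 hε.le, mul_pos hs0 hs0]
  set a : ℝ := ε ^ 6 * (3 * t ^ 2 - 12 * t ^ 3 + 15 * t ^ 4 - 6 * t ^ 5) with ha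
  set b : ℝ := ε ^ 3 * (3 * s ^ 2 - 12 * s ^ 3 + 15 * s ^ 4 - 6 * s ^ 5) with hb
  have hb0 : 0 ≤ b := by
    have h1 : (0:ℝ) ≤ ε ^ 3 * (3 * s ^ 2 * (1 - s) ^ 2) * (1 - 2 * s) :=
      mul_nonneg (by positivity) (by linarith)
    nlinarith [h1]
  have hb1 : b ≤ 1 := by
    have hf : 3 * s ^ 2 - 12 * s ^ 3 + 15 * s ^ 4 - 6 * s ^ 5 ≤ 3 * s ^ 2 := by
      nlinarith [mul_pos (mul_pos hs0 hs0) hs0, sq_nonneg s]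
    have hε3 : ε ^ 3 ≤ 1 := pow_le_one₀ hε.le (by linarith)
    have h4 : b ≤ ε ^ 3 * (3 * s ^ 2) := by
      rw [hb]; exact mul_le_mul_of_nonneg_left hf (by positivity)
    have h5 : ε ^ 3 * (3 * s ^ 2) ≤ 1 * (3 * s ^ 2) :=
      mul_le_mul_of_nonneg_right hε3 (by positivity)
    nlinarith [h4, h5]
  have hDu1 : 1 ≤ (1 + a ^ 2) ^ ((3 : ℝ) / 2) :=
    Real.one_le_rpow (by linarith [sq_nonneg a]) (by norm_num)
  have hDupos : (0 : ℝ) < (1 + a ^ 2) ^ ((3 : ℝ) / 2) := lt_of_lt_of_le one_pos hDu1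
  have hDvpos : (0 : ℝ) < (1 + b ^ 2) ^ ((3 : ℝ) / 2) :=
    Real.rpow_pos_of_pos (by positivity) _
  have hDvle : (1 + b ^ 2) ^ ((3 : ℝ) / 2) ≤ 3 := by
    calc (1 + b ^ 2) ^ ((3 : ℝ) / 2) ≤ (2 : ℝ) ^ ((3 : ℝ) / 2) :=
          Real.rpow_le_rpow (by positivity)
            (by nlinarith [hb0, hb1]) (by norm_num)
      _ ≤ 3 := rpow_32_le_3
  set Nu : ℝ := ε ^ 6 * (6 * t - 36 * t ^ 2 + 60 * t ^ 3 - 30 * t ^ 4) with hNu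
  set Nv : ℝ := ε ^ 3 * (6 * s - 36 * s ^ 2 + 60 * s ^ 3 - 30 * s ^ 4) with hNv
  have hNvlb : (9 / 2) * (ε ^ 4 * (t * (1 - t))) ≤ Nv := by
    have h1 : (0:ℝ) ≤ ε ^ 3 * s * (1 - s) * ((3 / 2 : ℝ) - 30 * s + 30 * s ^ 2) :=
      mul_nonneg (mul_nonneg (mul_nonneg (by positivity) hs0.le) (by linarith))
        (by nlinarith)
    have h2 : ε ^ 4 * (t * (1 - t)) = ε ^ 3 * (s * (1 - s)) := by
      rw [← key]; ring
    have h3 : Nv = ε ^ 3 * s * (1 - s) * ((3 / 2 : ℝ) - 30 * s + 30 * s ^ 2)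
        + (9 / 2) * (ε ^ 3 * (s * (1 - s))) := by rw [hNv]; ring
    rw [h2]
    linarith
  have hmid : (0:ℝ) ≤ (3 / 2) * (ε ^ 4 * (t * (1 - t))) := by positivity
  have hNv0 : 0 ≤ Nv := le_trans (by positivity) hNvlb
  have hRHS : (3 / 2) * (ε ^ 4 * (t * (1 - t))) ≤ Nv / ((1 + b ^ 2) ^ ((3 : ℝ) / 2)) := by
    have h1 : Nv / 3 ≤ Nv / ((1 + b ^ 2) ^ ((3 : ℝ) / 2)) :=
      div_le_div_of_nonneg_left hNv0 hDvpos hDvle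
    have h2 : (3 / 2) * (ε ^ 4 * (t * (1 - t))) ≤ Nv / 3 := by linarith
    linarith
  rcases le_or_gt Nu 0 with hNu0 | hNu0
  · have hLHS : Nu / ((1 + a ^ 2) ^ ((3 : ℝ) / 2)) ≤ 0 :=
      div_nonpos_of_nonpos_of_nonneg hNu0 (le_of_lt hDupos)
    linarith
  · have hLHS : Nu / ((1 + a ^ 2) ^ ((3 : ℝ) / 2)) ≤ Nu := div_le_self (le_of_lt hNu0) hDu1
    have hNuub : Nu ≤ (3 / 2) * (ε ^ 4 * (t * (1 - t))) := by
      have h1 : 6 * ε ^ 6 * (t * (1 - t)) - Nu = 30 * ε ^ 6 * (t * (1 - t)) ^ 2 := by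
        rw [hNu]; ring
      have h2 : (0:ℝ) ≤ 30 * ε ^ 6 * (t * (1 - t)) ^ 2 := by positivity
      have h3 : (0:ℝ) ≤ (3 / 2 - 6 * ε ^ 2) * (ε ^ 4 * (t * (1 - t))) :=
        mul_nonneg (by nlinarith) (by positivity)
      have h4 : (3 / 2) * (ε ^ 4 * (t * (1 - t))) - 6 * ε ^ 6 * (t * (1 - t))
          = (3 / 2 - 6 * ε ^ 2) * (ε ^ 4 * (t * (1 - t))) := by ring
      linarith
    linarith
end

section
/- There exist b > 0 and real functions u, v that are C² on (0,b) and C¹ on [0,b], with u(t) ≥ v(t) > 0 for all t ∈ (0,b], u(0) = 0, u'(0) = 0, u'(t) ≥ 0 and v'(t) ≥ 0 for all t ∈ (0,b), satisfying the main hypothesis (whenever u(t) = v(s) with 0 < t < s < b, one has u''(t) ≤ v''(s)), and yet u is not identically equal to v on [0,b]. -/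
open Real Set Filter
open scoped Topology

local notation "ψ" => Real.smoothTransition
local notation "g" => expNegInvGlue

lemma g_mono : Monotone expNegInvGlue := by
  intro x y hxy
  rcases le_or_gt x 0 with hx | hx
  · rw [expNegInvGlue.zero_of_nonpos hx]; exact expNegInvGlue.nonneg y
  · have hy : 0 < y := lt_of_lt_of_le hx hxy
    simp only [expNegInvGlue, not_le.2 hx, not_le.2 hy, if_false]
    exact Real.exp_le_exp.2 (neg_le_neg (inv_anti₀ hx hxy))

lemma g_strict {x y : ℝ} (hx : 0 < x) (hxy : x < y) : g x < g y := by
  have hy : 0 < y := hx.trans hxy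
  simp only [expNegInvGlue, not_le.2 hx, not_le.2 hy, if_false]
  exact Real.exp_lt_exp.2 (neg_lt_neg (inv_strictAnti₀ hx hxy))

lemma psi_mono : Monotone Real.smoothTransition := by
  intro x y hxy
  unfold Real.smoothTransition
  rw [div_le_div_iff₀ (Real.smoothTransition.pos_denom x) (Real.smoothTransition.pos_denom y)]
  have h1 : g x ≤ g y := g_mono hxy
  have h2 : g (1 - y) ≤ g (1 - x) := g_mono (by linarith)
  have h3 : 0 ≤ g x := expNegInvGlue.nonneg x
  have h4 : 0 ≤ g (1 - y) := expNegInvGlue.nonneg _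
  nlinarith

lemma psi_strict {x y : ℝ} (hx : 0 ≤ x) (hxy : x < y) (hy : y ≤ 1) : ψ x < ψ y := by
  unfold Real.smoothTransition
  rw [div_lt_div_iff₀ (Real.smoothTransition.pos_denom x) (Real.smoothTransition.pos_denom y)]
  have hgy : 0 < g y := expNegInvGlue.pos_of_pos (lt_of_le_of_lt hx hxy)
  have hb : 0 < g (1 - x) := expNegInvGlue.pos_of_pos (by linarith)
  have ha : 0 ≤ g x := expNegInvGlue.nonneg x
  have hac : g x ≤ g y := g_mono hxy.le
  have key : g x * g (1 - y) < g y * g (1 - x) := by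
    rcases eq_or_lt_of_le hy with rfl | hy1
    · rw [sub_self, expNegInvGlue.zero, mul_zero]; positivity
    · have hd : 0 < g (1 - y) := expNegInvGlue.pos_of_pos (by linarith)
      have hdb : g (1 - y) < g (1 - x) := g_strict (by linarith) (by linarith)
      nlinarith
  nlinarith

lemma deriv_nonneg_of_monotone {f : ℝ → ℝ} {x : ℝ} (hm : Monotone f)
    (hd : DifferentiableAt ℝ f x) : 0 ≤ deriv f x := by
  have h := hd.hasDerivAt
  rw [hasDerivAt_iff_tendsto_slope] at h
  have h2 : Tendsto (slope f x) (𝓝[>] x) (𝓝 (deriv f x)) :=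
    h.mono_left (nhdsWithin_mono x (fun y hy => (ne_of_gt hy)))
  refine ge_of_tendsto h2 ?_
  filter_upwards [self_mem_nhdsWithin] with y hy
  have hxy : x < y := hy
  rw [slope_def_field]
  exact div_nonneg (sub_nonneg.2 (hm hxy.le)) (sub_nonneg.2 hxy.le)

lemma psi_cd : ContDiff ℝ (↑(⊤ : ℕ∞)) Real.smoothTransition := Real.smoothTransition.contDiff

lemma psi_diff : Differentiable ℝ Real.smoothTransition :=
  (contDiff_infty_iff_deriv.mp psi_cd).1

lemma psi'_cd : ContDiff ℝ (↑(⊤ : ℕ∞)) (deriv Real.smoothTransition) :=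
  (contDiff_infty_iff_deriv.mp psi_cd).2

lemma psi'_diff : Differentiable ℝ (deriv Real.smoothTransition) :=
  (contDiff_infty_iff_deriv.mp psi'_cd).1

lemma shift_diff {f : ℝ → ℝ} (hf : Differentiable ℝ f) (c y : ℝ) :
    DifferentiableAt ℝ (fun z => f (z - c)) y := by
  have := (hf (y - c)).comp y ((differentiableAt_id).sub_const c)
  exact this

lemma psi'_nonneg (x : ℝ) : 0 ≤ deriv ψ x :=
  deriv_nonneg_of_monotone psi_mono (psi_diff x)

lemma psi'_zero_of_nonpos {x : ℝ} (hx : x ≤ 0) : deriv ψ x = 0 := by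
  rcases eq_or_lt_of_le hx with rfl | hx'
  · have hmin : IsLocalMin ψ 0 := by
      refine Filter.Eventually.of_forall (fun y => ?_)
      rw [Real.smoothTransition.zero]; exact Real.smoothTransition.nonneg y
    exact hmin.deriv_eq_zero
  · have he : ψ =ᶠ[𝓝 x] (fun _ => (0 : ℝ)) :=
      Filter.eventuallyEq_of_mem (Iio_mem_nhds hx') (fun y hy =>
        Real.smoothTransition.zero_of_nonpos (le_of_lt hy))
    rw [he.deriv_eq, deriv_const]

lemma psi'_zero_of_one_le {x : ℝ} (hx : 1 ≤ x) : deriv ψ x = 0 := by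
  rcases eq_or_lt_of_le hx with rfl | hx'
  · have hmax : IsLocalMax ψ 1 := by
      refine Filter.Eventually.of_forall (fun y => ?_)
      rw [Real.smoothTransition.one]; exact Real.smoothTransition.le_one y
    exact hmax.deriv_eq_zero
  · have he : ψ =ᶠ[𝓝 x] (fun _ => (1 : ℝ)) :=
      Filter.eventuallyEq_of_mem (Ioi_mem_nhds hx') (fun y hy =>
        Real.smoothTransition.one_of_one_le (le_of_lt hy))
    rw [he.deriv_eq, deriv_const]

lemma psi''_zero_of_nonpos {x : ℝ} (hx : x ≤ 0) : deriv (deriv ψ) x = 0 := by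
  rcases eq_or_lt_of_le hx with rfl | hx'
  · have hmin : IsLocalMin (deriv ψ) 0 := by
      refine Filter.Eventually.of_forall (fun y => ?_)
      rw [psi'_zero_of_nonpos le_rfl]; exact psi'_nonneg y
    exact hmin.deriv_eq_zero
  · have he : deriv ψ =ᶠ[𝓝 x] (fun _ => (0 : ℝ)) :=
      Filter.eventuallyEq_of_mem (Iio_mem_nhds hx') (fun y hy =>
        psi'_zero_of_nonpos (le_of_lt hy))
    rw [he.deriv_eq, deriv_const]

lemma psi''_zero_of_one_le {x : ℝ} (hx : 1 ≤ x) : deriv (deriv ψ) x = 0 := by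
  rcases eq_or_lt_of_le hx with rfl | hx'
  · have hmin : IsLocalMin (deriv ψ) 1 := by
      refine Filter.Eventually.of_forall (fun y => ?_)
      rw [psi'_zero_of_one_le le_rfl]; exact psi'_nonneg y
    exact hmin.deriv_eq_zero
  · have he : deriv ψ =ᶠ[𝓝 x] (fun _ => (0 : ℝ)) :=
      Filter.eventuallyEq_of_mem (Ioi_mem_nhds hx') (fun y hy =>
        psi'_zero_of_one_le (le_of_lt hy))
    rw [he.deriv_eq, deriv_const]

lemma deriv_shift_sum (c : ℝ) :
    deriv (fun x => ψ x + ψ (x - c)) = fun x => deriv ψ x + deriv ψ (x - c) := by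
  funext x
  rw [deriv_fun_add (psi_diff x) (shift_diff psi_diff c x)]
  congr 1
  exact deriv_comp_sub_const ..

lemma deriv2_shift_sum (c x : ℝ) :
    deriv (deriv (fun y => ψ y + ψ (y - c))) x
      = deriv (deriv ψ) x + deriv (deriv ψ) (x - c) := by
  rw [deriv_shift_sum]
  rw [deriv_fun_add (psi'_diff x) (shift_diff psi'_diff c x)]
  congr 1
  exact deriv_comp_sub_const ..

/-- Example 1.1 of Li–Nirenberg: in Theorem 2.1 the strict monotonicity assumption
cannot be weakened to u' ≥ 0 and v' ≥ 0. -/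
theorem stmt_17 : ∃ (b : ℝ) (u v : ℝ → ℝ), 0 < b ∧
    ContDiffOn ℝ 2 u (Set.Ioo 0 b) ∧ ContDiffOn ℝ 2 v (Set.Ioo 0 b) ∧
    ContDiffOn ℝ 1 u (Set.Icc 0 b) ∧ ContDiffOn ℝ 1 v (Set.Icc 0 b) ∧
    (∀ t ∈ Set.Ioc 0 b, 0 < v t ∧ v t ≤ u t) ∧
    u 0 = 0 ∧ derivWithin u (Set.Icc 0 b) 0 = 0 ∧
    (∀ t ∈ Set.Ioo 0 b, 0 ≤ deriv u t ∧ 0 ≤ deriv v t) ∧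
    (∀ t s : ℝ, 0 < t → t < s → s < b → u t = v s →
      deriv (deriv u) t ≤ deriv (deriv v) s) ∧
    ¬ ∀ t ∈ Set.Icc 0 b, u t = v t := by
  refine ⟨3, (fun t => ψ t + ψ (t - 2)), (fun s => ψ s + ψ (s - 5/2)), by norm_num,
    ?_, ?_, ?_, ?_, ?_, ?_, ?_, ?_, ?_, ?_⟩
  · exact (Real.smoothTransition.contDiff.add ((Real.smoothTransition.contDiff.comp
      (contDiff_id.sub contDiff_const)) : ContDiff ℝ 2 fun t => ψ (t - 2))
      ).contDiffOn
  · exact (Real.smoothTransition.contDiff.add ((Real.smoothTransition.contDiff.comp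
      (contDiff_id.sub contDiff_const)) : ContDiff ℝ 2 fun t => ψ (t - 5/2))
      ).contDiffOn
  · exact (Real.smoothTransition.contDiff.add ((Real.smoothTransition.contDiff.comp
      (contDiff_id.sub contDiff_const)) : ContDiff ℝ 1 fun t => ψ (t - 2))
      ).contDiffOn
  · exact (Real.smoothTransition.contDiff.add ((Real.smoothTransition.contDiff.comp
      (contDiff_id.sub contDiff_const)) : ContDiff ℝ 1 fun t => ψ (t - 5/2))
      ).contDiffOn
  · rintro t ⟨ht0, _⟩
    constructor
    · have h1 := Real.smoothTransition.pos_of_pos ht0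
      have h2 := Real.smoothTransition.nonneg (t - 5/2)
      linarith
    · have := psi_mono (by linarith : t - 5/2 ≤ t - 2)
      linarith
  · show ψ 0 + ψ ((0:ℝ) - 2) = 0
    rw [Real.smoothTransition.zero, Real.smoothTransition.zero_of_nonpos (by norm_num)]
    norm_num
  · have hud : DifferentiableAt ℝ (fun t => ψ t + ψ (t - 2)) 0 :=
      (psi_diff 0).add (shift_diff psi_diff 2 0)
    rw [hud.derivWithin ((uniqueDiffOn_Icc (by norm_num : (0:ℝ) < 3)) 0
      (by norm_num [Set.mem_Icc]))]
    rw [congrFun (deriv_shift_sum 2) 0, psi'_zero_of_nonpos le_rfl,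
      psi'_zero_of_nonpos (by norm_num : (0:ℝ) - 2 ≤ 0)]
    norm_num
  · rintro t ⟨_, _⟩
    constructor
    · rw [congrFun (deriv_shift_sum 2) t]
      exact add_nonneg (psi'_nonneg t) (psi'_nonneg _)
    · rw [congrFun (deriv_shift_sum (5/2)) t]
      exact add_nonneg (psi'_nonneg t) (psi'_nonneg _)
  · intro t s ht hts hs3 heq
    simp only [] at heq
    rcases lt_or_ge t 1 with h1 | h1
    · exfalso
      have ht2 : ψ (t - 2) = 0 := Real.smoothTransition.zero_of_nonpos (by linarith)
      have hut : ψ t < 1 := Real.smoothTransition.lt_one_of_lt_one h1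
      have hs1 : s < 1 := by
        by_contra h
        push_neg at h
        have h1s : ψ s = 1 := Real.smoothTransition.one_of_one_le h
        have h5 : 0 ≤ ψ (s - 5/2) := Real.smoothTransition.nonneg _
        linarith
      have hs5 : ψ (s - 5/2) = 0 := Real.smoothTransition.zero_of_nonpos (by linarith)
      have : ψ t < ψ s := psi_strict ht.le hts hs1.le
      linarith
    · rcases le_or_gt t 2 with h2 | h2
      · have hψt : ψ t = 1 := Real.smoothTransition.one_of_one_le h1
        have ht2 : ψ (t - 2) = 0 := Real.smoothTransition.zero_of_nonpos (by linarith)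
        have hs5 : s - 5/2 ≤ 0 := by
          by_contra h
          push_neg at h
          have h1s : ψ s = 1 := Real.smoothTransition.one_of_one_le (by linarith)
          have : 0 < ψ (s - 5/2) := Real.smoothTransition.pos_of_pos (by linarith)
          linarith
        have hs1 : (1:ℝ) ≤ s := by
          by_contra h
          push_neg at h
          have : ψ s < 1 := Real.smoothTransition.lt_one_of_lt_one h
          have h0 : ψ (s - 5/2) = 0 := Real.smoothTransition.zero_of_nonpos hs5
          linarith
        rw [deriv2_shift_sum, deriv2_shift_sum,
          psi''_zero_of_one_le h1, psi''_zero_of_nonpos (by linarith : t - 2 ≤ 0),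
          psi''_zero_of_one_le hs1, psi''_zero_of_nonpos hs5]
      · have hψt : ψ t = 1 := Real.smoothTransition.one_of_one_le (by linarith)
        have hpt2 : 0 < ψ (t - 2) := Real.smoothTransition.pos_of_pos (by linarith)
        have hs52 : 5/2 < s := by
          by_contra h
          push_neg at h
          have h0 : ψ (s - 5/2) = 0 := Real.smoothTransition.zero_of_nonpos (by linarith)
          have := Real.smoothTransition.le_one s
          linarith
        have hψs : ψ s = 1 := Real.smoothTransition.one_of_one_le (by linarith)
        have heq2 : ψ (t - 2) = ψ (s - 5/2) := by linarith
        have harg : t - 2 = s - 5/2 := by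
          rcases lt_trichotomy (t - 2) (s - 5/2) with hlt | he | hgt
          · exfalso
            have := psi_strict (by linarith : (0:ℝ) ≤ t - 2) hlt (by linarith : s - 5/2 ≤ 1)
            linarith
          · exact he
          · exfalso
            have := psi_strict (by linarith : (0:ℝ) ≤ s - 5/2) hgt (by linarith : t - 2 ≤ 1)
            linarith
        rw [deriv2_shift_sum, deriv2_shift_sum,
          psi''_zero_of_one_le (by linarith : (1:ℝ) ≤ t),
          psi''_zero_of_one_le (by linarith : (1:ℝ) ≤ s), harg]
  · intro h
    have h3 := h 3 (by norm_num [Set.mem_Icc])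
    simp only [] at h3
    have e1 : (3:ℝ) - 2 = 1 := by norm_num
    have e2 : (3:ℝ) - 5/2 = 1/2 := by norm_num
    rw [e1, e2, Real.smoothTransition.one] at h3
    have := Real.smoothTransition.lt_one_of_lt_one (by norm_num : (1:ℝ)/2 < 1)
    linarith
end
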